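/- arXiv:2109.01778 — 3 statements merged into one kernel-verified Lean document; each statement's English description precedes it below -/
import Mathlib

section
/- Let (X, μ) be a measure space and (f_k)_{k∈ℕ} an orthogonal family in L²(X). There exists an absolute constant c > 0 such that the maximal function F*(x) = sup_{N∈ℕ} |∑_{k=0}^N f_k(x)| satisfies ‖F*‖₂² ≤ c ∑_{k=0}^∞ (log(2+k))² ‖f_k‖₂², provided the right-hand side is finite. -/
open MeasureTheory Filter Set
open scoped ENNReal
open scoped NNReal

/- ### ENNReal helper lemmas -/


lemma RM.amgm (a b t : ℝ≥0∞) (h0 : t ≠ 0) (ht : t ≠ ∞) : 2*(a*b) ≤ t⁻¹*a^2 + t*b^2 := by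
  rcases eq_or_ne a 0 with rfl | ha0; · simp
  rcases eq_or_ne b 0 with rfl | hb0; · simp
  rcases eq_or_ne a ∞ with rfl | hatop
  · have h1 : t⁻¹ * (⊤:ℝ≥0∞)^2 = ⊤ := by
      rw [ENNReal.top_pow (by norm_num), ENNReal.mul_top (ENNReal.inv_ne_zero.2 ht)]
    rw [h1]; simp
  rcases eq_or_ne b ∞ with rfl | hbtop
  · have h1 : t * (⊤:ℝ≥0∞)^2 = ⊤ := by
      rw [ENNReal.top_pow (by norm_num), ENNReal.mul_top h0]
    rw [h1]; simp
  lift a to ℝ≥0 using hatop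
  lift b to ℝ≥0 using hbtop
  lift t to ℝ≥0 using ht
  have ht0 : t ≠ 0 := by exact_mod_cast h0
  rw [← ENNReal.coe_inv ht0]
  have key : 2*(a*b) ≤ t⁻¹*a^2 + t*b^2 := by
    rw [← NNReal.coe_le_coe]
    push_cast
    have htpos : (0:ℝ) < (t:ℝ) := lt_of_le_of_ne t.coe_nonneg (by exact_mod_cast ht0.symm)
    have h := sq_nonneg ((a:ℝ) - (t:ℝ)*(b:ℝ))
    have h2 : (t:ℝ) * ((t:ℝ)⁻¹*(a:ℝ)^2 + (t:ℝ)*(b:ℝ)^2 - 2*((a:ℝ)*(b:ℝ))) = (a - t*b)^2 := by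
      field_simp; ring
    nlinarith [mul_pos htpos htpos]
  exact_mod_cast key

lemma RM.add_sq_le (a b t : ℝ≥0∞) (h0 : t ≠ 0) (ht : t ≠ ∞) :
    (a+b)^2 ≤ (1+t⁻¹)*a^2 + (1+t)*b^2 := by
  have h := RM.amgm a b t h0 ht
  calc (a+b)^2 = a^2 + 2*(a*b) + b^2 := by ring
    _ ≤ a^2 + (t⁻¹*a^2 + t*b^2) + b^2 := by gcongr
    _ = (1+t⁻¹)*a^2 + (1+t)*b^2 := by ring

lemma RM.three_sq (a b c : ℝ≥0∞) : (a+b+c)^2 ≤ 3*a^2+3*b^2+3*c^2 := by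
  have h1 := RM.amgm a b 1 one_ne_zero ENNReal.one_ne_top
  have h2 := RM.amgm a c 1 one_ne_zero ENNReal.one_ne_top
  have h3 := RM.amgm b c 1 one_ne_zero ENNReal.one_ne_top
  simp only [inv_one, one_mul] at h1 h2 h3
  calc (a+b+c)^2 = a^2+b^2+c^2+2*(a*b)+2*(a*c)+2*(b*c) := by ring
    _ ≤ a^2+b^2+c^2+(a^2+b^2)+(a^2+c^2)+(b^2+c^2) := by gcongr
    _ = 3*a^2+3*b^2+3*c^2 := by ring

lemma RM.cs {ι : Type*} (s : Finset ι) (u v : ι → ℝ≥0∞) :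
    (∑ i ∈ s, u i * v i)^2 ≤ (∑ i ∈ s, (u i)^2) * (∑ i ∈ s, (v i)^2) := by
  have key : 2 * (∑ i ∈ s, u i * v i)^2 ≤ 2 * ((∑ i ∈ s, (u i)^2) * (∑ i ∈ s, (v i)^2)) := by
    calc 2 * (∑ i ∈ s, u i * v i)^2
        = ∑ i ∈ s, ∑ j ∈ s, 2*((u i * v j) * (u j * v i)) := by
          rw [sq, Finset.sum_mul_sum, Finset.mul_sum]
          refine Finset.sum_congr rfl fun i _ => ?_
          rw [Finset.mul_sum]
          refine Finset.sum_congr rfl fun j _ => ?_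
          ring
      _ ≤ ∑ i ∈ s, ∑ j ∈ s, ((u i * v j)^2 + (u j * v i)^2) := by
          refine Finset.sum_le_sum fun i _ => Finset.sum_le_sum fun j _ => ?_
          exact RM.amgm _ _ 1 one_ne_zero ENNReal.one_ne_top |>.trans (by simp)
      _ = 2 * ((∑ i ∈ s, (u i)^2) * (∑ i ∈ s, (v i)^2)) := by
          simp_rw [Finset.sum_add_distrib, mul_pow]
          rw [Finset.sum_comm (s := s) (t := s) (f := fun i j => (u j)^2*(v i)^2)]
          simp_rw [← Finset.mul_sum, ← Finset.sum_mul, Finset.sum_mul_sum]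
          simp_rw [← Finset.mul_sum, ← Finset.sum_mul]
          ring
  exact (ENNReal.mul_le_mul_iff_right (by norm_num) (by norm_num)).1 key

lemma RM.iSup_sq (u : ℕ → ℝ≥0∞) : (⨆ i, u i)^2 = ⨆ i, (u i)^2 := by
  refine le_antisymm ?_ (iSup_le fun i => pow_le_pow_left₀ zero_le (le_iSup u i) 2)
  rw [sq, ENNReal.iSup_mul]
  refine iSup_le fun i => ?_
  rw [ENNReal.mul_iSup]
  refine iSup_le fun j => ?_
  rcases le_total (u i) (u j) with h | h
  · calc u i * u j ≤ u j * u j := by gcongr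
      _ = (u j)^2 := (sq _).symm
      _ ≤ _ := le_iSup (fun i => (u i)^2) j
  · calc u i * u j ≤ u i * u i := by gcongr
      _ = (u i)^2 := (sq _).symm
      _ ≤ _ := le_iSup (fun i => (u i)^2) i

lemma RM.real_invsq (p : ℕ) :
    ∑ q ∈ Finset.range p, (1:ℝ)/((q:ℝ)+1)^2 ≤ 2 - 2/((p:ℝ)+1) := by
  induction p with
  | zero => simp
  | succ p ih =>
    rw [Finset.sum_range_succ]
    have hp : (0:ℝ) < (p:ℝ)+1 := by positivity
    have hp2 : (0:ℝ) < (p:ℝ)+2 := by positivity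
    have key : (1:ℝ)/((p:ℝ)+1)^2 ≤ 2/((p:ℝ)+1) - 2/((p:ℝ)+2) := by
      rw [div_sub_div _ _ (ne_of_gt hp) (ne_of_gt hp2),
        div_le_div_iff₀ (by positivity) (by positivity)]
      ring_nf
      nlinarith
    push_cast
    have heq : ((p:ℝ)+1+1) = (p:ℝ)+2 := by ring
    rw [heq]
    linarith

lemma RM.ennreal_invsq (p : ℕ) :
    ∑ q ∈ Finset.range p, (((q:ℝ≥0∞)+1)⁻¹)^2 ≤ 2 := by
  have hterm : ∀ q : ℕ, (((q:ℝ≥0∞)+1)⁻¹)^2 = ENNReal.ofReal ((1:ℝ)/((q:ℝ)+1)^2) := by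
    intro q
    have h1 : ((q:ℝ≥0∞)+1) = ENNReal.ofReal ((q:ℝ)+1) := by
      rw [ENNReal.ofReal_add (by positivity) zero_le_one]
      simp [ENNReal.ofReal_natCast]
    rw [h1, ← ENNReal.ofReal_inv_of_pos (by positivity), ← ENNReal.ofReal_pow (by positivity)]
    congr 1
    rw [one_div, ← inv_pow]
  simp_rw [hterm]
  rw [← ENNReal.ofReal_sum_of_nonneg (fun q _ => by positivity)]
  calc ENNReal.ofReal (∑ q ∈ Finset.range p, (1:ℝ)/((q:ℝ)+1)^2)
      ≤ ENNReal.ofReal 2 := by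
        apply ENNReal.ofReal_le_ofReal
        refine (RM.real_invsq p).trans ?_
        have : (0:ℝ) ≤ 2/((p:ℝ)+1) := by positivity
        linarith
    _ = 2 := by norm_num

lemma RM.log_coeff {p k : ℕ} (hk : 2^p ≤ k) :
    ((p:ℝ)+1)^2 ≤ 9 * (Real.log (2+(k:ℝ)))^2 := by
  have l2 : (0.6931471803:ℝ) < Real.log 2 := Real.log_two_gt_d9
  have hkr : ((2:ℝ))^p ≤ (k:ℝ) := by exact_mod_cast hk
  have h2k : (0:ℝ) < 2 + k := by positivity
  have h1 : Real.log 2 ≤ Real.log (2+(k:ℝ)) :=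
    Real.log_le_log (by norm_num) (by have := (Nat.cast_nonneg k : (0:ℝ) ≤ (k:ℝ)); linarith)
  have h2 : (p:ℝ) * Real.log 2 ≤ Real.log (2+(k:ℝ)) := by
    rw [← Real.log_pow]
    exact Real.log_le_log (by positivity) (by push_cast; linarith)
  have hL : (0:ℝ) < Real.log (2+(k:ℝ)) := lt_of_lt_of_le (by linarith) h1
  have hp : (0:ℝ) ≤ (p:ℝ) := Nat.cast_nonneg p
  have h3 : (p:ℝ)+1 ≤ 3 * Real.log (2+(k:ℝ)) := by nlinarith
  nlinarith

lemma RM.aemeasurable_finset_sup {X : Type*} [MeasurableSpace X] {μ : Measure X}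
    {ι : Type*} (s : Finset ι) (F : ι → X → ℝ≥0∞) (h : ∀ i, AEMeasurable (F i) μ) :
    AEMeasurable (fun x => s.sup fun i => F i x) μ := by
  classical
  induction s using Finset.induction with
  | empty => simpa using aemeasurable_const
  | insert _ _ hnot ih =>
    simp only [Finset.sup_insert]
    exact (h _).sup ih

/- ### Lp-specific lemmas -/

section RM
variable {X : Type*} [MeasurableSpace X] {μ : Measure X}

noncomputable def RMps (f : ℕ → Lp ℂ 2 μ) (a n : ℕ) (x : X) : ℝ≥0∞ :=
  (‖∑ k ∈ Finset.Ico a (a+n), (f k : X → ℂ) x‖₊ : ℝ≥0∞)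

noncomputable def RMQ (f : ℕ → Lp ℂ 2 μ) (a M : ℕ) (x : X) : ℝ≥0∞ :=
  (Finset.range (2^M+1)).sup fun n => RMps f a n x ^ 2

noncomputable def RME (f : ℕ → Lp ℂ 2 μ) (k : ℕ) : ℝ≥0∞ := (‖f k‖₊ : ℝ≥0∞)^2

lemma RMps_meas (f : ℕ → Lp ℂ 2 μ) (a n : ℕ) : AEMeasurable (RMps f a n) μ := by
  have h : AEStronglyMeasurable (fun x => ∑ k ∈ Finset.Ico a (a+n), (f k : X → ℂ) x) μ :=
    Finset.aestronglyMeasurable_fun_sum _ fun k _ => Lp.aestronglyMeasurable (f k)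
  exact h.enorm

lemma RMQ_meas (f : ℕ → Lp ℂ 2 μ) (a M : ℕ) : AEMeasurable (RMQ f a M) μ :=
  RM.aemeasurable_finset_sup _ _ fun n => (RMps_meas f a n).pow_const 2

lemma RM_coeFn_sum (f : ℕ → Lp ℂ 2 μ) (s : Finset ℕ) :
    (↑(∑ k ∈ s, f k) : X → ℂ) =ᵐ[μ] fun x => ∑ k ∈ s, (f k : X → ℂ) x := by
  classical
  induction s using Finset.induction with
  | empty => simp only [Finset.sum_empty]; exact Lp.coeFn_zero ℂ 2 μ
  | @insert a s ha ih =>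
    rw [Finset.sum_insert ha]
    filter_upwards [Lp.coeFn_add (f a) (∑ k ∈ s, f k), ih] with x hx hx'
    simp only [Finset.sum_insert ha, hx, Pi.add_apply, hx']

lemma RM_sq_int (F : Lp ℂ 2 μ) :
    ∫⁻ x, (‖F x‖₊ : ℝ≥0∞)^2 ∂μ = (‖F‖₊ : ℝ≥0∞)^2 := by
  have h := eLpNorm_eq_lintegral_rpow_enorm_toReal (f := (F : X → ℂ)) (μ := μ)
    (two_ne_zero) (ENNReal.ofNat_ne_top)
  have h2 : (‖F‖₊ : ℝ≥0∞) = eLpNorm (F : X → ℂ) 2 μ := by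
    rw [Lp.nnnorm_def, ENNReal.coe_toNNReal (Lp.eLpNorm_ne_top F)]
  rw [h2, h]
  rw [ENNReal.toReal_ofNat] at *
  rw [← ENNReal.rpow_natCast _ 2, ← ENNReal.rpow_mul]
  norm_num
  rfl

/-- Pythagoras for orthogonal families, in `ℝ≥0∞`. -/
lemma RM_pyth (f : ℕ → Lp ℂ 2 μ)
    (horth : ∀ j k, j ≠ k → (inner ℂ (f j) (f k) : ℂ) = 0) (s : Finset ℕ) :
    ∫⁻ x, (‖∑ k ∈ s, (f k : X → ℂ) x‖₊ : ℝ≥0∞)^2 ∂μ = ∑ k ∈ s, RME f k := by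
  have hae : ∫⁻ x, (‖∑ k ∈ s, (f k : X → ℂ) x‖₊ : ℝ≥0∞)^2 ∂μ
      = ∫⁻ x, (‖(↑(∑ k ∈ s, f k) : X → ℂ) x‖₊ : ℝ≥0∞)^2 ∂μ := by
    refine lintegral_congr_ae ?_
    filter_upwards [RM_coeFn_sum f s] with x hx
    rw [hx]
  rw [hae, RM_sq_int]
  -- now show (‖∑ f k‖₊ : ℝ≥0∞)^2 = ∑ RME
  have hnorm : ‖∑ k ∈ s, f k‖^2 = ∑ k ∈ s, ‖f k‖^2 := by
    have key : (inner ℂ (∑ k ∈ s, f k) (∑ k ∈ s, f k) : ℂ) = ∑ j ∈ s, (inner ℂ (f j) (f j) : ℂ) := by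
      rw [sum_inner]
      refine Finset.sum_congr rfl fun j hj => ?_
      rw [inner_sum]
      exact Finset.sum_eq_single_of_mem j hj fun k _ hk => horth j k (Ne.symm hk)
    have h1 := inner_self_eq_norm_sq (𝕜 := ℂ) (∑ k ∈ s, f k)
    rw [key] at h1
    rw [← h1, map_sum]
    exact Finset.sum_congr rfl fun j _ => inner_self_eq_norm_sq (𝕜 := ℂ) (f j)
  have hnn : (‖∑ k ∈ s, f k‖₊ : ℝ≥0)^2 = ∑ k ∈ s, (‖f k‖₊ : ℝ≥0)^2 := by
    apply NNReal.coe_injective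
    push_cast
    exact hnorm
  unfold RME
  rw [← ENNReal.coe_pow, hnn]
  push_cast
  rfl

end RM

section RMcore
variable {X : Type*} [MeasurableSpace X] {μ : Measure X}

lemma RMps_pyth (f : ℕ → Lp ℂ 2 μ)
    (horth : ∀ j k, j ≠ k → (inner ℂ (f j) (f k) : ℂ) = 0) (a n : ℕ) :
    ∫⁻ x, RMps f a n x ^ 2 ∂μ = ∑ k ∈ Finset.Ico a (a+n), RME f k := by
  simp only [RMps]
  exact RM_pyth f horth _

/-- Core finite Rademacher–Menshov maximal inequality over dyadic blocks. -/
lemma RM_core (f : ℕ → Lp ℂ 2 μ)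
    (horth : ∀ j k, j ≠ k → (inner ℂ (f j) (f k) : ℂ) = 0) :
    ∀ (M a : ℕ), ∫⁻ x, RMQ f a M x ∂μ
      ≤ ((M:ℝ≥0∞)+1)^2 * ∑ k ∈ Finset.Ico a (a+2^M), RME f k := by
  intro M
  induction M with
  | zero =>
    intro a
    have hpt : ∀ x, RMQ f a 0 x ≤ RMps f a 1 x ^ 2 := by
      intro x
      refine Finset.sup_le fun n hn => ?_
      rw [Finset.mem_range] at hn
      norm_num at hn
      interval_cases n
      · simp [RMps]
      · exact le_rfl
    calc ∫⁻ x, RMQ f a 0 x ∂μ ≤ ∫⁻ x, RMps f a 1 x ^ 2 ∂μ := lintegral_mono hpt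
      _ = ∑ k ∈ Finset.Ico a (a+2^0), RME f k := by
          rw [RMps_pyth f horth a 1]
          norm_num
      _ ≤ (((0:ℕ):ℝ≥0∞)+1)^2 * ∑ k ∈ Finset.Ico a (a+2^0), RME f k :=
          le_mul_of_one_le_left zero_le (by norm_num)
  | succ M ih =>
    intro a
    set c : ℝ≥0∞ := (M:ℝ≥0∞) + 1 with hc
    have hc0 : c ≠ 0 := by simp [hc]
    have hctop : c ≠ ∞ := by simp [hc, ENNReal.add_ne_top]
    -- pointwise bound
    have hpt : ∀ x, RMQ f a (M+1) x
        ≤ RMQ f a M x + ((1+c) * RMps f a (2^M) x ^ 2 + (1+c⁻¹) * RMQ f (a+2^M) M x) := by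
      intro x
      refine Finset.sup_le fun n hn => ?_
      rw [Finset.mem_range] at hn
      have hn' : n ≤ 2^(M+1) := by omega
      by_cases hn2 : n ≤ 2^M
      · have h1 : RMps f a n x ^ 2 ≤ RMQ f a M x :=
          Finset.le_sup (f := fun n => RMps f a n x ^ 2) (by simp [Finset.mem_range]; omega)
        exact h1.trans (le_add_right le_rfl)
      · push_neg at hn2
        have hm : n - 2^M ≤ 2^M := by
          have : 2^(M+1) = 2^M + 2^M := by rw [pow_succ]; ring
          omega
        have hsplit : RMps f a n x ≤ RMps f a (2^M) x + RMps f (a+2^M) (n - 2^M) x := by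
          unfold RMps
          have hub : (a+2^M)+(n-2^M) = a+n := by omega
          have hsum : ∑ k ∈ Finset.Ico a (a+n), (f k : X → ℂ) x
              = (∑ k ∈ Finset.Ico a (a+2^M), (f k : X → ℂ) x)
                + ∑ k ∈ Finset.Ico (a+2^M) ((a+2^M)+(n-2^M)), (f k : X → ℂ) x := by
            rw [hub, Finset.sum_Ico_consecutive _ (by omega : a ≤ a+2^M) (by omega : a+2^M ≤ a+n)]
          rw [hsum]
          exact_mod_cast nnnorm_add_le _ _
        have hQ2 : RMps f (a+2^M) (n - 2^M) x ^ 2 ≤ RMQ f (a+2^M) M x :=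
          Finset.le_sup (f := fun m => RMps f (a+2^M) m x ^ 2) (by simp [Finset.mem_range]; omega)
        calc RMps f a n x ^ 2
            ≤ (RMps f a (2^M) x + RMps f (a+2^M) (n - 2^M) x)^2 := by
              exact pow_le_pow_left₀ zero_le hsplit 2
          _ ≤ (1+c) * RMps f a (2^M) x ^ 2 + (1+c⁻¹) * RMps f (a+2^M) (n - 2^M) x ^ 2 := by
              have := RM.add_sq_le (RMps f a (2^M) x) (RMps f (a+2^M) (n - 2^M) x) c⁻¹
                (ENNReal.inv_ne_zero.2 hctop) (ENNReal.inv_ne_top.2 hc0)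
              rwa [inv_inv] at this
          _ ≤ (1+c) * RMps f a (2^M) x ^ 2 + (1+c⁻¹) * RMQ f (a+2^M) M x := by gcongr
          _ ≤ _ := le_add_self
    -- integrate
    have m1 : AEMeasurable (RMQ f a M) μ := RMQ_meas f a M
    have m2 : AEMeasurable (fun x => RMps f a (2^M) x ^ 2) μ := (RMps_meas f a (2^M)).pow_const 2
    have m3 : AEMeasurable (RMQ f (a+2^M) M) μ := RMQ_meas f (a+2^M) M
    have hint : ∫⁻ x, RMQ f a (M+1) x ∂μ
        ≤ ∫⁻ x, RMQ f a M x ∂μ + ((1+c) * ∫⁻ x, RMps f a (2^M) x ^ 2 ∂μ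
          + (1+c⁻¹) * ∫⁻ x, RMQ f (a+2^M) M x ∂μ) := by
      calc ∫⁻ x, RMQ f a (M+1) x ∂μ
          ≤ ∫⁻ x, (RMQ f a M x + ((1+c) * RMps f a (2^M) x ^ 2
              + (1+c⁻¹) * RMQ f (a+2^M) M x)) ∂μ := lintegral_mono hpt
        _ = _ := by
            rw [lintegral_add_left' m1, lintegral_add_left' (m2.const_mul _),
              lintegral_const_mul'' _ m2, lintegral_const_mul'' _ m3]
    set S1 : ℝ≥0∞ := ∑ k ∈ Finset.Ico a (a+2^M), RME f k with hS1
    set S2 : ℝ≥0∞ := ∑ k ∈ Finset.Ico (a+2^M) ((a+2^M)+2^M), RME f k with hS2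
    have hp1 : ∫⁻ x, RMps f a (2^M) x ^ 2 ∂μ = S1 := RMps_pyth f horth a (2^M)
    have htot : ∫⁻ x, RMQ f a (M+1) x ∂μ
        ≤ c^2 * S1 + ((1+c) * S1 + (1+c⁻¹) * (c^2 * S2)) := by
      refine hint.trans ?_
      gcongr
      · exact ih a
      · rw [hp1]
      · exact ih (a+2^M)
    have hcoef : c^2 * S1 + ((1+c) * S1 + (1+c⁻¹) * (c^2 * S2)) ≤ (c+1)^2 * (S1 + S2) := by
      have e1 : (1+c⁻¹) * c^2 = c^2 + c := by
        rw [add_mul, one_mul, sq, ← mul_assoc, ENNReal.inv_mul_cancel hc0 hctop, one_mul]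
      have e2 : (c+1)^2 = c^2 + 2*c + 1 := by ring
      calc c^2 * S1 + ((1+c) * S1 + (1+c⁻¹) * (c^2 * S2))
          = (c^2 + 1 + c) * S1 + (c^2 + c) * S2 := by
            rw [← mul_assoc, e1]; ring
        _ ≤ (c+1)^2 * S1 + (c+1)^2 * S2 := by
            have hcc : c ≤ 2*c := by rw [two_mul]; exact le_add_self
            have hb1 : c^2+1+c ≤ (c+1)^2 := by
              rw [e2]
              calc c^2+1+c = (c^2+c)+1 := by ring
                _ ≤ (c^2+2*c)+1 := add_le_add_left (add_le_add_right hcc _) _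
            have hb2 : c^2+c ≤ (c+1)^2 := by
              rw [e2]
              exact le_add_right (add_le_add_right hcc _)
            exact add_le_add (mul_le_mul_left hb1 _) (mul_le_mul_left hb2 _)
        _ = (c+1)^2 * (S1 + S2) := by rw [mul_add]
    have hsum : S1 + S2 = ∑ k ∈ Finset.Ico a (a+2^(M+1)), RME f k := by
      have h2 : a + 2^M + 2^M = a + 2^(M+1) := by rw [pow_succ]; ring
      rw [hS1, hS2,
        Finset.sum_Ico_consecutive _ (Nat.le_add_right _ _) (Nat.le_add_right _ _), h2]
    have hcast : ((M+1:ℕ):ℝ≥0∞) + 1 = c + 1 := by push_cast [hc]; ring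
    calc ∫⁻ x, RMQ f a (M+1) x ∂μ ≤ (c+1)^2 * (S1 + S2) := htot.trans hcoef
      _ = (((M+1:ℕ):ℝ≥0∞)+1)^2 * ∑ k ∈ Finset.Ico a (a+2^(M+1)), RME f k := by
          rw [hcast, hsum]

end RMcore

section RMmaster
variable {X : Type*} [MeasurableSpace X] {μ : Measure X}

lemma RM_master (f : ℕ → Lp ℂ 2 μ) (x : X) (N : ℕ) :
    (‖∑ k ∈ Finset.range (N+1), (f k : X → ℂ) x‖₊ : ℝ≥0∞)^2
      ≤ 3*(‖(f 0 : X → ℂ) x‖₊ : ℝ≥0∞)^2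
        + 6*∑' q:ℕ, ((q:ℝ≥0∞)+1)^2 * RMps f (2^q) (2^q) x ^ 2
        + 3*∑' p:ℕ, RMQ f (2^p) p x := by
  set n := N+1 with hn_def
  have hn : n ≠ 0 := Nat.succ_ne_zero N
  set p := Nat.log 2 n with hp_def
  have h1 : 2^p ≤ n := Nat.pow_log_le_self 2 hn
  have h2 : n < 2^(p+1) := Nat.lt_pow_succ_log_self (by norm_num) n
  have hmle : n - 2^p ≤ 2^p := by
    have : 2^(p+1) = 2^p + 2^p := by rw [pow_succ]; ring
    omega
  -- decomposition
  have e1 : ∑ k ∈ Finset.range n, (f k : X → ℂ) x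
      = (∑ k ∈ Finset.range (2^p), (f k : X → ℂ) x)
        + ∑ k ∈ Finset.Ico (2^p) (2^p + (n - 2^p)), (f k : X → ℂ) x := by
    have hub : 2^p + (n - 2^p) = n := by omega
    rw [hub, Finset.range_eq_Ico, Finset.range_eq_Ico]
    exact (Finset.sum_Ico_consecutive _ (Nat.zero_le _) h1).symm
  have e2 : ∀ P:ℕ, ∑ k ∈ Finset.range (2^P), (f k : X → ℂ) x
      = (f 0 : X → ℂ) x
        + ∑ q ∈ Finset.range P, ∑ k ∈ Finset.Ico (2^q) (2^q+2^q), (f k : X → ℂ) x := by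
    intro P
    induction P with
    | zero => simp
    | succ P ih =>
      have h2' : 2^P + 2^P = 2^(P+1) := by rw [pow_succ]; ring
      calc ∑ k ∈ Finset.range (2^(P+1)), (f k : X → ℂ) x
          = (∑ k ∈ Finset.range (2^P), (f k : X → ℂ) x)
            + ∑ k ∈ Finset.Ico (2^P) (2^P+2^P), (f k : X → ℂ) x := by
            rw [Finset.range_eq_Ico,
              show (2:ℕ)^(P+1) = 2^P + 2^P from h2'.symm, Finset.range_eq_Ico]
            exact (Finset.sum_Ico_consecutive _ (Nat.zero_le _) (Nat.le_add_right _ _)).symm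
        _ = ((f 0 : X → ℂ) x
            + ∑ q ∈ Finset.range P, ∑ k ∈ Finset.Ico (2^q) (2^q+2^q), (f k : X → ℂ) x)
            + ∑ k ∈ Finset.Ico (2^P) (2^P+2^P), (f k : X → ℂ) x := by rw [ih]
        _ = _ := by rw [Finset.sum_range_succ, add_assoc]
  set A : ℝ≥0∞ := (‖(f 0 : X → ℂ) x‖₊ : ℝ≥0∞) with hA
  set B : ℝ≥0∞ := ∑ q ∈ Finset.range p, RMps f (2^q) (2^q) x with hB
  set C : ℝ≥0∞ := RMps f (2^p) (n - 2^p) x with hC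
  have hABC : (‖∑ k ∈ Finset.range n, (f k : X → ℂ) x‖₊ : ℝ≥0∞) ≤ A + B + C := by
    rw [e1, e2 p]
    have t1 : ∀ u v : ℂ, (‖u+v‖₊:ℝ≥0∞) ≤ (‖u‖₊:ℝ≥0∞) + (‖v‖₊:ℝ≥0∞) := fun u v => by
      exact_mod_cast nnnorm_add_le u v
    have t2 : (‖∑ q ∈ Finset.range p, ∑ k ∈ Finset.Ico (2^q) (2^q+2^q), (f k : X → ℂ) x‖₊ : ℝ≥0∞)
        ≤ B := by
      rw [hB]
      simp only [RMps]
      rw [← ENNReal.coe_finset_sum]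
      exact_mod_cast nnnorm_sum_le _ _
    calc (‖((f 0 : X → ℂ) x
          + ∑ q ∈ Finset.range p, ∑ k ∈ Finset.Ico (2^q) (2^q+2^q), (f k : X → ℂ) x)
          + ∑ k ∈ Finset.Ico (2^p) (2^p + (n - 2^p)), (f k : X → ℂ) x‖₊ : ℝ≥0∞)
        ≤ (‖(f 0 : X → ℂ) x
            + ∑ q ∈ Finset.range p, ∑ k ∈ Finset.Ico (2^q) (2^q+2^q), (f k : X → ℂ) x‖₊ : ℝ≥0∞)
          + C := by
          rw [hC]; simp only [RMps]; exact t1 _ _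
      _ ≤ (A + B) + C := by
          gcongr
          exact (t1 _ _).trans (by gcongr)
  have hBsq : B^2 ≤ 2 * ∑' q:ℕ, ((q:ℝ≥0∞)+1)^2 * RMps f (2^q) (2^q) x ^ 2 := by
    have hBw : B = ∑ q ∈ Finset.range p,
        (((q:ℝ≥0∞)+1)⁻¹) * (((q:ℝ≥0∞)+1) * RMps f (2^q) (2^q) x) := by
      refine Finset.sum_congr rfl fun q _ => ?_
      rw [← mul_assoc, ENNReal.inv_mul_cancel (by simp) (by simp), one_mul]
    calc B^2 ≤ (∑ q ∈ Finset.range p, (((q:ℝ≥0∞)+1)⁻¹)^2)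
          * (∑ q ∈ Finset.range p, (((q:ℝ≥0∞)+1) * RMps f (2^q) (2^q) x)^2) := by
          rw [hBw]; exact RM.cs _ _ _
      _ ≤ 2 * ∑' q:ℕ, ((q:ℝ≥0∞)+1)^2 * RMps f (2^q) (2^q) x ^ 2 := by
          refine mul_le_mul' (RM.ennreal_invsq p) ?_
          refine le_trans ?_ (ENNReal.sum_le_tsum (Finset.range p))
          exact Finset.sum_le_sum fun q _ => le_of_eq (mul_pow _ _ 2)
  have hCsq : C^2 ≤ ∑' p':ℕ, RMQ f (2^p') p' x := by
    refine le_trans ?_ (ENNReal.le_tsum p)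
    exact Finset.le_sup (f := fun m => RMps f (2^p) m x ^ 2)
      (by simp only [Finset.mem_range]; omega)
  calc (‖∑ k ∈ Finset.range n, (f k : X → ℂ) x‖₊ : ℝ≥0∞)^2
      ≤ (A+B+C)^2 := pow_le_pow_left₀ zero_le hABC 2
    _ ≤ 3*A^2+3*B^2+3*C^2 := RM.three_sq A B C
    _ ≤ 3*A^2 + 3*(2 * ∑' q:ℕ, ((q:ℝ≥0∞)+1)^2 * RMps f (2^q) (2^q) x ^ 2)
        + 3*(∑' p':ℕ, RMQ f (2^p') p' x) := by gcongr
    _ = _ := by rw [← mul_assoc]; norm_num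

end RMmaster

section RMfinal
variable {X : Type*} [MeasurableSpace X] {μ : Measure X}

lemma RME_eq_ofReal (f : ℕ → Lp ℂ 2 μ) (k : ℕ) :
    RME f k = ENNReal.ofReal (‖f k‖^2) := by
  unfold RME
  rw [ENNReal.ofReal_pow (norm_nonneg _), ofReal_norm_eq_enorm]
  rfl
end RMfinal

/-- Rademacher–Menshov theorem, maximal-inequality part: there is an absolute
constant `c > 0` such that for every orthogonal family `(f_k)` in `L²(X, μ)`
with `∑ (log(2+k))² ‖f_k‖₂² < ∞`, the maximal function
`F*(x) = sup_N |∑_{k=0}^N f_k(x)|` satisfies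
`‖F*‖₂² ≤ c ∑ (log(2+k))² ‖f_k‖₂²`. -/
theorem rademacher_menshov_maximal
    {X : Type*} [MeasurableSpace X] (μ : Measure X) :
    ∃ c : ℝ, 0 < c ∧ ∀ f : ℕ → Lp ℂ 2 μ,
      (∀ j k, j ≠ k → (inner ℂ (f j) (f k) : ℂ) = 0) →
      (Summable fun k : ℕ => (Real.log (2 + (k : ℝ))) ^ 2 * ‖f k‖ ^ 2) →
      ∫⁻ x, (⨆ N : ℕ, (‖∑ k ∈ Finset.range (N + 1), (f k : X → ℂ) x‖₊ : ℝ≥0∞)) ^ 2 ∂μ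
        ≤ ENNReal.ofReal (c * ∑' k : ℕ, (Real.log (2 + (k : ℝ))) ^ 2 * ‖f k‖ ^ 2) := by
  refine ⟨100, by norm_num, fun f horth hsumm => ?_⟩
  have hRnn : ∀ k : ℕ, 0 ≤ (Real.log (2 + (k : ℝ)))^2 * ‖f k‖^2 :=
    fun k => mul_nonneg (sq_nonneg _) (sq_nonneg _)
  -- block sums of RME
  set W : ℕ → ℝ≥0∞ := fun p => ((p:ℝ≥0∞)+1)^2 * ∑ k ∈ Finset.Ico (2^p) (2^p+2^p), RME f k
    with hW
  -- Step 1: bound the integral by 3 E0 + 6 ∑' W + 3 ∑' W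
  have step1 : ∫⁻ x, (⨆ N : ℕ, (‖∑ k ∈ Finset.range (N + 1), (f k : X → ℂ) x‖₊ : ℝ≥0∞)) ^ 2 ∂μ
      ≤ 3 * RME f 0 + 6 * ∑' p, W p + 3 * ∑' p, W p := by
    have hpt : ∀ x, (⨆ N : ℕ, (‖∑ k ∈ Finset.range (N + 1), (f k : X → ℂ) x‖₊ : ℝ≥0∞)) ^ 2
        ≤ 3*(‖(f 0 : X → ℂ) x‖₊ : ℝ≥0∞)^2
          + 6*∑' q:ℕ, ((q:ℝ≥0∞)+1)^2 * RMps f (2^q) (2^q) x ^ 2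
          + 3*∑' p:ℕ, RMQ f (2^p) p x := by
      intro x
      rw [RM.iSup_sq]
      exact iSup_le fun N => RM_master f x N
    have mA : AEMeasurable (fun x => (‖(f 0 : X → ℂ) x‖₊ : ℝ≥0∞)^2) μ :=
      ((Lp.aestronglyMeasurable (f 0)).enorm).pow_const 2
    have mT1 : AEMeasurable (fun x => ∑' q:ℕ, ((q:ℝ≥0∞)+1)^2 * RMps f (2^q) (2^q) x ^ 2) μ :=
      AEMeasurable.ennreal_tsum fun q => ((RMps_meas f _ _).pow_const 2).const_mul _
    have mT2 : AEMeasurable (fun x => ∑' p:ℕ, RMQ f (2^p) p x) μ :=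
      AEMeasurable.ennreal_tsum fun p => RMQ_meas f _ _
    have hint1 : ∫⁻ x, (‖(f 0 : X → ℂ) x‖₊ : ℝ≥0∞)^2 ∂μ = RME f 0 := by
      have h := RM_pyth f horth {0}
      simp only [Finset.sum_singleton] at h
      rw [h]
    have hint2 : ∫⁻ x, (∑' q:ℕ, ((q:ℝ≥0∞)+1)^2 * RMps f (2^q) (2^q) x ^ 2) ∂μ = ∑' p, W p := by
      rw [lintegral_tsum fun q => ((RMps_meas f _ _).pow_const 2).const_mul _]
      refine tsum_congr fun q => ?_
      rw [lintegral_const_mul'' _ ((RMps_meas f _ _).pow_const 2), RMps_pyth f horth]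
    have hint3 : ∫⁻ x, (∑' p:ℕ, RMQ f (2^p) p x) ∂μ ≤ ∑' p, W p := by
      rw [lintegral_tsum fun p => RMQ_meas f _ _]
      exact ENNReal.tsum_le_tsum fun p => RM_core f horth p (2^p)
    calc ∫⁻ x, (⨆ N : ℕ, (‖∑ k ∈ Finset.range (N + 1), (f k : X → ℂ) x‖₊ : ℝ≥0∞)) ^ 2 ∂μ
        ≤ ∫⁻ x, (3*(‖(f 0 : X → ℂ) x‖₊ : ℝ≥0∞)^2
            + 6*∑' q:ℕ, ((q:ℝ≥0∞)+1)^2 * RMps f (2^q) (2^q) x ^ 2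
            + 3*∑' p:ℕ, RMQ f (2^p) p x) ∂μ := lintegral_mono hpt
      _ = 3 * ∫⁻ x, (‖(f 0 : X → ℂ) x‖₊ : ℝ≥0∞)^2 ∂μ
            + 6 * ∫⁻ x, (∑' q:ℕ, ((q:ℝ≥0∞)+1)^2 * RMps f (2^q) (2^q) x ^ 2) ∂μ
            + 3 * ∫⁻ x, (∑' p:ℕ, RMQ f (2^p) p x) ∂μ := by
          rw [lintegral_add_left' ((mA.const_mul _).fun_add (mT1.const_mul _)),
            lintegral_add_left' (mA.const_mul _),
            lintegral_const_mul'' _ mA, lintegral_const_mul'' _ mT1,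
            lintegral_const_mul'' _ mT2]
      _ ≤ _ := by
          rw [hint1, hint2]
          gcongr
  -- Step 2: numeric bounds
  have key1 : 3 * RME f 0 ≤ ENNReal.ofReal (19 * ((Real.log (2 + ((0:ℕ):ℝ)))^2 * ‖f 0‖^2)) := by
    rw [RME_eq_ofReal, show (3:ℝ≥0∞) = ENNReal.ofReal 3 by norm_num,
      ← ENNReal.ofReal_mul (by norm_num)]
    apply ENNReal.ofReal_le_ofReal
    have l2 : (0.6931471803:ℝ) < Real.log 2 := Real.log_two_gt_d9
    have h0 : ((0:ℕ):ℝ) = 0 := by norm_num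
    rw [h0, add_zero]
    have hl : (0.48:ℝ) ≤ (Real.log 2)^2 := by nlinarith
    nlinarith [mul_le_mul_of_nonneg_right hl (sq_nonneg ‖f 0‖), sq_nonneg ‖f 0‖]
  have key2 : (9:ℝ≥0∞) * ∑' p, W p
      ≤ ∑' k:ℕ, ENNReal.ofReal (81 * ((Real.log (2 + (k:ℝ)))^2 * ‖f k‖^2)) := by
    rw [← ENNReal.tsum_mul_left]
    have per : ∀ p:ℕ, 9 * W p
        ≤ ∑ k ∈ Finset.Ico (2^p : ℕ) (2^p+2^p),
            ENNReal.ofReal (81 * ((Real.log (2 + (k:ℝ)))^2 * ‖f k‖^2)) := by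
      intro p
      rw [hW, ← mul_assoc, Finset.mul_sum]
      refine Finset.sum_le_sum fun k hk => ?_
      have hk2 : 2^p ≤ k := (Finset.mem_Ico.1 hk).1
      have hcoe : (9:ℝ≥0∞)*((p:ℝ≥0∞)+1)^2 = ENNReal.ofReal (9*((p:ℝ)+1)^2) := by
        rw [ENNReal.ofReal_mul (by norm_num), ENNReal.ofReal_pow (by positivity)]
        congr 1
        · norm_num
        · congr 1
          rw [ENNReal.ofReal_add (by positivity) (by norm_num), ENNReal.ofReal_natCast]
          norm_num
      rw [hcoe, RME_eq_ofReal, ← ENNReal.ofReal_mul (by positivity)]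
      apply ENNReal.ofReal_le_ofReal
      have hlog := RM.log_coeff hk2
      have hnn : (0:ℝ) ≤ ‖f k‖^2 := sq_nonneg _
      nlinarith
    refine le_trans (ENNReal.tsum_le_tsum per) ?_
    rw [ENNReal.tsum_eq_iSup_nat]
    refine iSup_le fun P => ?_
    have hblocks : ∑ p ∈ Finset.range P, ∑ k ∈ Finset.Ico (2^p : ℕ) (2^p+2^p),
          ENNReal.ofReal (81 * ((Real.log (2 + (k:ℝ)))^2 * ‖f k‖^2))
        = ∑ k ∈ Finset.Ico (1 : ℕ) (2^P),
            ENNReal.ofReal (81 * ((Real.log (2 + (k:ℝ)))^2 * ‖f k‖^2)) := by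
      induction P with
      | zero => simp
      | succ P ih =>
        have h2' : 2^P + 2^P = 2^(P+1) := by rw [pow_succ]; ring
        rw [Finset.sum_range_succ, ih,
          Finset.sum_Ico_consecutive _ (Nat.one_le_two_pow) (Nat.le_add_right _ _), h2']
    rw [hblocks]
    exact ENNReal.sum_le_tsum _
  -- Step 3: combine
  have comb : 3 * RME f 0 + 6 * ∑' p, W p + 3 * ∑' p, W p
      ≤ ∑' k:ℕ, ENNReal.ofReal (100 * ((Real.log (2 + (k:ℝ)))^2 * ‖f k‖^2)) := by
    have h9 : 6 * ∑' p, W p + 3 * ∑' p, W p = 9 * ∑' p, W p := by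
      rw [← add_mul]; norm_num
    calc 3 * RME f 0 + 6 * ∑' p, W p + 3 * ∑' p, W p
        = 3 * RME f 0 + 9 * ∑' p, W p := by rw [add_assoc, h9]
      _ ≤ ENNReal.ofReal (19 * ((Real.log (2 + ((0:ℕ):ℝ)))^2 * ‖f 0‖^2))
          + ∑' k:ℕ, ENNReal.ofReal (81 * ((Real.log (2 + (k:ℝ)))^2 * ‖f k‖^2)) :=
          add_le_add key1 key2
      _ ≤ ∑' k:ℕ, ENNReal.ofReal (19 * ((Real.log (2 + (k:ℝ)))^2 * ‖f k‖^2))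
          + ∑' k:ℕ, ENNReal.ofReal (81 * ((Real.log (2 + (k:ℝ)))^2 * ‖f k‖^2)) := by
          gcongr
          exact ENNReal.le_tsum 0
      _ = ∑' k:ℕ, (ENNReal.ofReal (19 * ((Real.log (2 + (k:ℝ)))^2 * ‖f k‖^2))
          + ENNReal.ofReal (81 * ((Real.log (2 + (k:ℝ)))^2 * ‖f k‖^2))) :=
          (ENNReal.tsum_add).symm
      _ = _ := by
          refine tsum_congr fun k => ?_
          rw [← ENNReal.ofReal_add (by positivity) (by positivity)]
          congr 1
          ring
  refine (step1.trans comb).trans (le_of_eq ?_)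
  rw [← ENNReal.ofReal_tsum_of_nonneg (fun k => by positivity) (hsumm.mul_left 100)]
  congr 1
  exact tsum_mul_left
end

section
/- Let L be a non-negative self-adjoint operator on L²(X) with spectral resolution E_L, and suppose that for every compact set K ⊆ X there exist constants C_K, a > 0 such that ‖F(L) χ_K‖_{2→2} ≤ C_K M^a ‖F(M·)‖_{L²(0,∞)} for all M > 1 and all Borel functions F supported in [M/4, M]. Then the point spectrum of L in (1/4, ∞) is empty, i.e., for every λ > 1/4, the spectral projection E_L({λ}) = 0. -/
open MeasureTheory Filter Set
open scoped ENNReal Topology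

/-- If the Borel functional calculus `Φ` of a non-negative self-adjoint
operator `L` on `L²(X)` satisfies the Plancherel-type estimate
`‖F(L) χ_K‖_{2→2} ≤ C_K M^a ‖F(M·)‖_{L²}` for all compact `K`, all `M > 1`
and all Borel `F` supported in `[M/4, M]`, then the point spectrum of `L`
in `(1/4, ∞)` is empty: `E_L({λ}) = Φ(χ_{{λ}}) = 0` for every `λ > 1/4`. -/
theorem no_point_spectrum_of_plancherel
    {X : Type*} [MetricSpace X] [MeasurableSpace X] [BorelSpace X]
    [SigmaCompactSpace X] (μ : Measure X)
    (Φ : (ℝ → ℂ) → (Lp ℂ 2 μ →L[ℂ] Lp ℂ 2 μ))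
    (hyp : ∀ K : Set X, IsCompact K → ∃ CK a : ℝ, 0 < CK ∧ 0 < a ∧
      ∀ M : ℝ, 1 < M → ∀ F : ℝ → ℂ, Measurable F →
        Function.support F ⊆ Set.Icc (M / 4) M →
        ∀ f : Lp ℂ 2 μ, (∀ᵐ x ∂μ, x ∉ K → f x = 0) →
          ‖Φ F f‖ ≤ CK * M ^ a *
            Real.sqrt (∫ t in Set.Ioi (0 : ℝ), ‖F (M * t)‖ ^ 2) * ‖f‖) :
    ∀ lam : ℝ, 1 / 4 < lam → Φ (Set.indicator {lam} 1) = 0 := by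
  intro lam hlam
  have hlam0 : (0:ℝ) < lam := by linarith
  set F : ℝ → ℂ := Set.indicator {lam} 1 with hF
  have hFmeas : Measurable F := by
    rw [hF]
    exact (measurable_one : Measurable (1 : ℝ → ℂ)).indicator (measurableSet_singleton lam)
  -- Step 1 : for functions supported in a compact set, Φ F kills them
  have key : ∀ g : Lp ℂ 2 μ, ∀ K : Set X, IsCompact K →
      (∀ᵐ x ∂μ, x ∉ K → g x = 0) → Φ F g = 0 := by
    intro g K hK hg
    obtain ⟨CK, a, hCK, ha, hbound⟩ := hyp K hK
    have hM : (1:ℝ) < 4 * lam := by linarith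
    have hsupp : Function.support F ⊆ Set.Icc ((4*lam)/4) (4*lam) := by
      intro x hx
      have hxl : x = lam := by
        by_contra h
        exact hx (Set.indicator_of_notMem (by simpa using h) 1)
      subst hxl
      constructor <;> nlinarith
    have hint : (∫ t in Set.Ioi (0:ℝ), ‖F ((4*lam) * t)‖ ^ 2) = 0 := by
      have hzero : ∀ᵐ t : ℝ, t ≠ (1/4 : ℝ) := by
        have : (volume : Measure ℝ) {(1/4 : ℝ)} = 0 := measure_singleton _
        filter_upwards [measure_eq_zero_iff_ae_notMem.mp this] with t ht
        simpa using ht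
      have : ∀ᵐ t ∂(volume.restrict (Set.Ioi (0:ℝ))),
          ‖F ((4*lam) * t)‖ ^ 2 = 0 := by
        refine ae_restrict_of_ae ?_
        filter_upwards [hzero] with t ht
        have hne : 4 * lam * t ≠ lam := by
          intro h
          apply ht
          have h2 : lam * (4 * t - 1) = 0 := by linear_combination h
          rcases mul_eq_zero.mp h2 with h3 | h3
          · exact absurd h3 hlam0.ne'
          · linarith
        have hF0 : F (4 * lam * t) = 0 := by
          rw [hF]
          exact Set.indicator_of_notMem (by simpa using hne) 1
        simp [hF0]
      calc (∫ t in Set.Ioi (0:ℝ), ‖F ((4*lam) * t)‖ ^ 2)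
          = ∫ t in Set.Ioi (0:ℝ), (0:ℝ) := integral_congr_ae this
        _ = 0 := integral_zero _ _
    have hb := hbound (4*lam) hM F hFmeas hsupp g hg
    rw [hint, Real.sqrt_zero, mul_zero, zero_mul] at hb
    exact norm_le_zero_iff.mp hb
  -- Step 2 : approximate an arbitrary f by compactly supported truncations
  refine ContinuousLinearMap.ext fun f => ?_
  rw [ContinuousLinearMap.zero_apply]
  set A : ℕ → Set X := compactCovering X with hA
  have hAm : ∀ n, MeasurableSet (A n) :=
    fun n => (isCompact_compactCovering X n).isClosed.measurableSet
  set g : ℕ → Lp ℂ 2 μ :=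
    fun n => ((Lp.memLp f).indicator (hAm n)).toLp ((A n).indicator f) with hg
  have hgzero : ∀ n, Φ F (g n) = 0 := by
    intro n
    refine key (g n) (A n) (isCompact_compactCovering X n) ?_
    filter_upwards [MemLp.coeFn_toLp ((Lp.memLp f).indicator (hAm n) : MemLp ((A n).indicator f) 2 μ)] with x hx hxA
    rw [hx, Set.indicator_of_notMem hxA]
  -- the truncations converge to f in L²
  have htend : Tendsto g atTop (𝓝 f) := by
    rw [Lp.tendsto_Lp_iff_tendsto_eLpNorm']
    -- reduce to the tail integrals
    have hGmeas : AEMeasurable (fun x => ((‖f x‖₊ : ℝ≥0∞)) ^ (2:ℝ)) μ :=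
      ((Lp.aestronglyMeasurable f).aemeasurable.nnnorm.coe_nnreal_ennreal).pow_const _
    have htot : (∫⁻ x, (‖f x‖₊ : ℝ≥0∞) ^ (2:ℝ) ∂μ) ≠ ∞ := by
      have := Lp.eLpNorm_lt_top f
      rw [eLpNorm_eq_lintegral_rpow_enorm_toReal (by norm_num) (by norm_num)] at this
      simp only [ENNReal.toReal_ofNat, enorm_eq_nnnorm] at this
      intro hcontra
      rw [hcontra] at this
      simp at this
    have cover : AECover μ atTop A := by
      refine ⟨ae_of_all _ fun x => ?_, hAm⟩
      obtain ⟨n, hn⟩ := exists_mem_compactCovering x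
      exact eventually_atTop.2 ⟨n, fun m hm => compactCovering_subset X hm hn⟩
    have tendsto_in :
        Tendsto (fun n => ∫⁻ x in A n, (‖f x‖₊ : ℝ≥0∞) ^ (2:ℝ) ∂μ) atTop
          (𝓝 (∫⁻ x, (‖f x‖₊ : ℝ≥0∞) ^ (2:ℝ) ∂μ)) :=
      cover.lintegral_tendsto_of_countably_generated hGmeas
    have tendsto_compl :
        Tendsto (fun n => ∫⁻ x in (A n)ᶜ, (‖f x‖₊ : ℝ≥0∞) ^ (2:ℝ) ∂μ) atTop (𝓝 0) := by
      have heq : ∀ n, (∫⁻ x in (A n)ᶜ, (‖f x‖₊ : ℝ≥0∞) ^ (2:ℝ) ∂μ)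
          = (∫⁻ x, (‖f x‖₊ : ℝ≥0∞) ^ (2:ℝ) ∂μ)
            - ∫⁻ x in A n, (‖f x‖₊ : ℝ≥0∞) ^ (2:ℝ) ∂μ := by
        intro n
        have hadd := lintegral_add_compl (μ := μ) (fun x => (‖f x‖₊ : ℝ≥0∞) ^ (2:ℝ)) (hAm n)
        rw [← hadd, ENNReal.add_sub_cancel_left]
        intro hcontra
        apply htot
        rw [← hadd, hcontra]
        simp
      simp_rw [heq]
      have := ENNReal.Tendsto.sub
        (tendsto_const_nhds (x := (∫⁻ x, (‖f x‖₊ : ℝ≥0∞) ^ (2:ℝ) ∂μ)) (f := atTop))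
        tendsto_in (Or.inl htot)
      simpa using this
    -- identify the L² distance with the tail integral
    have hdist : ∀ n, eLpNorm (⇑(g n) - ⇑f) 2 μ
        = (∫⁻ x in (A n)ᶜ, (‖f x‖₊ : ℝ≥0∞) ^ (2:ℝ) ∂μ) ^ (1/2 : ℝ) := by
      intro n
      have hcongr : (⇑(g n) - ⇑f : X → ℂ) =ᵐ[μ] -(((A n)ᶜ).indicator ⇑f) := by
        filter_upwards [MemLp.coeFn_toLp ((Lp.memLp f).indicator (hAm n) : MemLp ((A n).indicator f) 2 μ)] with x hx
        simp only [Pi.sub_apply, Pi.neg_apply, hg, hx]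
        by_cases hxA : x ∈ A n
        · simp only [Set.indicator_of_mem hxA, sub_self,
            Set.indicator_of_notMem (show x ∉ (A n)ᶜ by simpa using hxA), neg_zero]
        · simp only [Set.indicator_of_notMem hxA, zero_sub,
            Set.indicator_of_mem (show x ∈ (A n)ᶜ by simpa using hxA)]
      rw [eLpNorm_congr_ae hcongr, eLpNorm_neg,
        eLpNorm_indicator_eq_eLpNorm_restrict (hAm n).compl,
        eLpNorm_eq_lintegral_rpow_enorm_toReal (by norm_num) (by norm_num)]
      simp [enorm_eq_nnnorm]
    simp_rw [hdist]
    have h0 : ((0:ℝ≥0∞)) ^ (1/2 : ℝ) = 0 := by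
      simp [ENNReal.zero_rpow_of_pos]
    rw [← h0]
    exact tendsto_compl.ennrpow_const _
  have : Tendsto (fun n => Φ F (g n)) atTop (𝓝 (Φ F f)) :=
    ((Φ F).continuous.tendsto f).comp htend
  simp_rw [hgzero] at this
  exact (tendsto_nhds_unique tendsto_const_nhds this).symm
end

section
/- Let L be a non-negative self-adjoint operator on L²(X) with purely discrete spectrum, distinct eigenvalues λ₁ < λ₂ < ⋯ satisfying k ≤ A λ_k^a for large k, and eigenprojections P_k. If f ∈ L²(X) satisfies ‖log(2+L) f‖₂ < ∞, then the partial sums S_R(L)f = ∑_{k: λ_k ≤ R} P_k f converge to f almost everywhere as R → ∞, and ‖sup_{R>0} |S_R(L) f|‖_{L²}² ≤ C ‖log(2+L) f‖₂². -/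
open MeasureTheory Filter Set
open scoped ENNReal Topology

/-- Dyadic square function for Rademacher–Menshov. -/
private noncomputable def Rq (v : ℕ → ℂ) (m s : ℕ) : ℝ :=
  ∑ j ∈ Finset.range (m+1), ∑ i ∈ Finset.range (2^(m-j)),
    ‖∑ k ∈ Finset.Ico (s + i*2^j) (s + i*2^j + 2^j), v k‖^2

private lemma Rq_nonneg (v : ℕ → ℂ) (m s : ℕ) : 0 ≤ Rq v m s :=
  Finset.sum_nonneg fun _ _ => Finset.sum_nonneg fun _ _ => sq_nonneg _

private lemma Rq_le_succ (v : ℕ → ℂ) (m s : ℕ) : Rq v m s ≤ Rq v (m+1) s := by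
  unfold Rq
  conv_rhs => rw [Finset.sum_range_succ]
  refine le_trans ?_ (le_add_of_nonneg_right (Finset.sum_nonneg fun _ _ => sq_nonneg _))
  refine Finset.sum_le_sum fun j hj => ?_
  refine Finset.sum_le_sum_of_subset_of_nonneg ?_ (fun _ _ _ => sq_nonneg _)
  exact Finset.range_subset_range.2 (Nat.pow_le_pow_right (by norm_num) (by omega))

private lemma Rq_step (v : ℕ → ℂ) (m s : ℕ) :
    ‖∑ k ∈ Finset.Ico s (s + 2^m), v k‖^2 + Rq v m (s + 2^m) ≤ Rq v (m+1) s := by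
  unfold Rq
  conv_rhs => rw [Finset.sum_range_succ]
  refine le_trans ?_ (le_add_of_nonneg_right (Finset.sum_nonneg fun _ _ => sq_nonneg _))
  have hsplit : ∀ j ∈ Finset.range (m+1),
      (if j = m then ‖∑ k ∈ Finset.Ico s (s + 2^m), v k‖^2 else 0)
        + (∑ i ∈ Finset.range (2^(m-j)),
            ‖∑ k ∈ Finset.Ico (s + 2^m + i*2^j) (s + 2^m + i*2^j + 2^j), v k‖^2)
      ≤ ∑ i ∈ Finset.range (2^(m+1-j)),
          ‖∑ k ∈ Finset.Ico (s + i*2^j) (s + i*2^j + 2^j), v k‖^2 := by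
    intro j hj
    have hj' : j ≤ m := by simpa using Nat.lt_succ_iff.1 (Finset.mem_range.1 hj)
    have hpow : 2^(m-j) * 2^j = 2^m := by
      rw [← pow_add, Nat.sub_add_cancel hj']
    have h2 : 2^(m+1-j) = 2^(m-j) + 2^(m-j) := by
      have h : m+1-j = (m-j)+1 := by omega
      rw [h, pow_succ, Nat.mul_two]
    rw [h2, Finset.sum_range_add]
    have hsecond : (∑ i ∈ Finset.range (2^(m-j)),
        ‖∑ k ∈ Finset.Ico (s + (2^(m-j) + i)*2^j) (s + (2^(m-j) + i)*2^j + 2^j), v k‖^2)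
        = ∑ i ∈ Finset.range (2^(m-j)),
            ‖∑ k ∈ Finset.Ico (s + 2^m + i*2^j) (s + 2^m + i*2^j + 2^j), v k‖^2 := by
      refine Finset.sum_congr rfl fun i _ => ?_
      have : s + (2^(m-j) + i)*2^j = s + 2^m + i*2^j := by
        rw [Nat.add_mul, hpow]; ring
      rw [this]
    rw [hsecond]
    have hfirst : (if j = m then ‖∑ k ∈ Finset.Ico s (s + 2^m), v k‖^2 else 0)
        ≤ ∑ i ∈ Finset.range (2^(m-j)),
            ‖∑ k ∈ Finset.Ico (s + i*2^j) (s + i*2^j + 2^j), v k‖^2 := by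
      by_cases hjm : j = m
      · subst hjm
        simp
      · simp only [if_neg hjm]
        exact Finset.sum_nonneg fun _ _ => sq_nonneg _
    linarith
  calc ‖∑ k ∈ Finset.Ico s (s + 2^m), v k‖^2 + Rq v m (s + 2^m)
      = ∑ j ∈ Finset.range (m+1),
          ((if j = m then ‖∑ k ∈ Finset.Ico s (s + 2^m), v k‖^2 else 0)
            + ∑ i ∈ Finset.range (2^(m-j)),
              ‖∑ k ∈ Finset.Ico (s + 2^m + i*2^j) (s + 2^m + i*2^j + 2^j), v k‖^2) := by
        rw [Finset.sum_add_distrib, Finset.sum_ite_eq' (Finset.range (m+1))]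
        simp [Rq]
    _ ≤ ∑ j ∈ Finset.range (m+1), ∑ i ∈ Finset.range (2^(m+1-j)),
          ‖∑ k ∈ Finset.Ico (s + i*2^j) (s + i*2^j + 2^j), v k‖^2 :=
        Finset.sum_le_sum hsplit

private lemma rm_pointwise (v : ℕ → ℂ) :
    ∀ m s n : ℕ, n ≤ 2^m →
      ‖∑ k ∈ Finset.Ico s (s+n), v k‖^2 ≤ ((m:ℝ)+1) * Rq v m s := by
  intro m
  induction m with
  | zero =>
      intro s n hn
      interval_cases n
      · simpa using Rq_nonneg v 0 s
      · have hRq : Rq v 0 s = ‖∑ k ∈ Finset.Ico s (s+1), v k‖^2 := by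
          unfold Rq; simp
        rw [hRq]; norm_num
  | succ m ih =>
      intro s n hn
      by_cases hcase : n ≤ 2^m
      · have h1 := ih s n hcase
        have h2 := Rq_le_succ v m s
        have h3 := Rq_nonneg v (m+1) s
        have hm : (0:ℝ) ≤ m := Nat.cast_nonneg m
        push_cast
        nlinarith
      · push_neg at hcase
        have hn' : n - 2^m ≤ 2^m := by
          have : (2:ℕ)^(m+1) = 2^m + 2^m := by rw [pow_succ, Nat.mul_two]
          omega
        have hsum : ∑ k ∈ Finset.Ico s (s+n), v k
            = (∑ k ∈ Finset.Ico s (s+2^m), v k)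
              + ∑ k ∈ Finset.Ico (s+2^m) (s+2^m+(n-2^m)), v k := by
          rw [show s+2^m+(n-2^m) = s+n by omega]
          exact (Finset.sum_Ico_consecutive v (by omega) (by omega)).symm
        set x := ‖∑ k ∈ Finset.Ico s (s+2^m), v k‖ with hx
        set y := ‖∑ k ∈ Finset.Ico (s+2^m) (s+2^m+(n-2^m)), v k‖ with hy
        set Q := Rq v m (s+2^m) with hQ
        have htri : ‖∑ k ∈ Finset.Ico s (s+n), v k‖ ≤ x + y := by
          rw [hsum]; exact norm_add_le _ _
        have hy2 : y^2 ≤ ((m:ℝ)+1) * Q := ih (s+2^m) (n-2^m) hn'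
        have hstep : x^2 + Q ≤ Rq v (m+1) s := Rq_step v m s
        have hQ0 : 0 ≤ Q := Rq_nonneg v m (s+2^m)
        have hx0 : 0 ≤ x := norm_nonneg _
        have hy0 : 0 ≤ y := norm_nonneg _
        have hm : (0:ℝ) ≤ m := Nat.cast_nonneg m
        have hS0 : (0:ℝ) ≤ ‖∑ k ∈ Finset.Ico s (s+n), v k‖ := norm_nonneg _
        have hkey : ((m:ℝ)+1) * (x+y)^2 ≤ ((m:ℝ)+1) * (((m:ℝ)+2) * (x^2 + Q)) := by
          nlinarith [sq_nonneg (((m:ℝ)+1)*x - y), hy2, hQ0, hm, sq_nonneg x, sq_nonneg y]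
        have h4 : (x+y)^2 ≤ ((m:ℝ)+2) * (x^2 + Q) :=
          le_of_mul_le_mul_left (by linarith) (by linarith : (0:ℝ) < (m:ℝ)+1)
        have h5 : ‖∑ k ∈ Finset.Ico s (s+n), v k‖^2 ≤ (x+y)^2 := by
          apply pow_le_pow_left₀ hS0 htri
        push_cast
        nlinarith [Rq_nonneg v (m+1) s]
private lemma sum_blocks {M : Type*} [AddCommMonoid M] (g : ℕ → M) (c d : ℕ) :
    ∀ N : ℕ, ∑ i ∈ Finset.range N, ∑ k ∈ Finset.Ico (c + i*d) (c + i*d + d), g k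
      = ∑ k ∈ Finset.Ico c (c + N*d), g k := by
  intro N
  induction N with
  | zero => simp
  | succ N ih =>
      rw [Finset.sum_range_succ, ih, show c + (N+1)*d = c + N*d + d by ring]
      exact Finset.sum_Ico_consecutive g (Nat.le_add_right _ _) (Nat.le_add_right _ _)

private lemma diff_sq_le (v : ℕ → ℂ) (n : ℕ) (hn : n ≠ 0) :
    ‖(∑ k ∈ Finset.range n, v k) - ∑ k ∈ Finset.range (2^(Nat.log 2 n)), v k‖^2
      ≤ ((Nat.log 2 n : ℝ)+1) * Rq v (Nat.log 2 n) (2^(Nat.log 2 n)) := by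
  set m := Nat.log 2 n with hm
  have h1 : 2^m ≤ n := Nat.pow_log_le_self 2 hn
  have h2 : n < 2^(m+1) := Nat.lt_pow_succ_log_self (by norm_num) n
  have h3 : n - 2^m ≤ 2^m := by
    have : (2:ℕ)^(m+1) = 2^m + 2^m := by rw [pow_succ, Nat.mul_two]
    omega
  have hd : (∑ k ∈ Finset.range n, v k) - ∑ k ∈ Finset.range (2^m), v k
      = ∑ k ∈ Finset.Ico (2^m) (2^m + (n - 2^m)), v k := by
    rw [show 2^m + (n - 2^m) = n by omega, Finset.sum_Ico_eq_sub _ h1]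
  rw [hd]
  exact rm_pointwise v m (2^m) (n - 2^m) h3

private lemma key_pointwise (v : ℕ → ℂ) (c : ℂ) (n : ℕ) (hn : n ≠ 0) :
    ‖∑ k ∈ Finset.range n, v k‖^2 ≤
      4*‖c‖^2 + 4*‖c - ∑ k ∈ Finset.range (2^(Nat.log 2 n)), v k‖^2
      + 2*(((Nat.log 2 n : ℝ)+1) * Rq v (Nat.log 2 n) (2^(Nat.log 2 n))) := by
  set m := Nat.log 2 n with hm
  set x1 := ‖c‖ with hx1
  set x2 := ‖c - ∑ k ∈ Finset.range (2^m), v k‖ with hx2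
  set x3 := ‖(∑ k ∈ Finset.range n, v k) - ∑ k ∈ Finset.range (2^m), v k‖ with hx3
  have h3 : x3^2 ≤ ((m:ℝ)+1) * Rq v m (2^m) := diff_sq_le v n hn
  have ht1 : ‖∑ k ∈ Finset.range n, v k‖ ≤ ‖∑ k ∈ Finset.range (2^m), v k‖ + x3 := by
    have h := norm_add_le (∑ k ∈ Finset.range (2^m), v k)
      ((∑ k ∈ Finset.range n, v k) - ∑ k ∈ Finset.range (2^m), v k)
    rwa [add_sub_cancel] at h
  have ht2 : ‖∑ k ∈ Finset.range (2^m), v k‖ ≤ x1 + x2 := by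
    have h := norm_sub_le c (c - ∑ k ∈ Finset.range (2^m), v k)
    rwa [sub_sub_cancel] at h
  have h0 : (0:ℝ) ≤ ‖∑ k ∈ Finset.range n, v k‖ := norm_nonneg _
  have hx10 : 0 ≤ x1 := norm_nonneg _
  have hx20 : 0 ≤ x2 := norm_nonneg _
  have hx30 : 0 ≤ x3 := norm_nonneg _
  have htot : ‖∑ k ∈ Finset.range n, v k‖ ≤ x1 + x2 + x3 := by linarith
  have hsq : ‖∑ k ∈ Finset.range n, v k‖^2 ≤ (x1 + x2 + x3)^2 :=
    pow_le_pow_left₀ h0 htot 2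
  nlinarith [sq_nonneg (x1 - x2), sq_nonneg (2*x1 - x3), sq_nonneg (2*x2 - x3), h3, hsq]
private lemma stepA (A a : ℝ) (hA : 0 < A) (ha : 0 < a) (lam : ℕ → ℝ)
    (hnonneg : ∀ k, 0 ≤ lam k) (K : ℕ)
    (hK : ∀ k : ℕ, K ≤ k → (k : ℝ) ≤ A * lam k ^ a) :
    ∃ C₁ : ℝ, 0 < C₁ ∧ ∀ m k : ℕ, 2^m ≤ k →
      ((m:ℝ)+1)^2 ≤ C₁ * Real.log (2 + lam k) ^ 2 := by
  have hlog2 : (0:ℝ) < Real.log 2 := Real.log_pos one_lt_two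
  have hL : ∀ k, Real.log 2 ≤ Real.log (2 + lam k) := fun k =>
    Real.log_le_log (by norm_num) (by linarith [hnonneg k])
  set K₂ : ℕ := max K 2 + ⌈Real.exp (max (2 * Real.log A) 1)⌉₊ with hK₂
  set D : ℝ := (4*a + (K₂:ℝ) + 2) / Real.log 2 with hD
  have hK₂0 : (0:ℝ) ≤ (K₂:ℝ) := Nat.cast_nonneg _
  have hD_pos : 0 < D := div_pos (by linarith) hlog2
  have hDlog : D * Real.log 2 = 4*a + (K₂:ℝ) + 2 := by
    rw [hD, div_mul_cancel₀ _ hlog2.ne']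
  refine ⟨D^2, by positivity, ?_⟩
  intro m k hmk
  have hLpos : 0 < Real.log (2 + lam k) := lt_of_lt_of_le hlog2 (hL k)
  have key : ((m:ℝ)+1) ≤ D * Real.log (2 + lam k) := by
    by_cases hk2 : K₂ ≤ k
    · have hkK : K ≤ k := le_trans (le_trans (le_max_left _ _) (Nat.le_add_right _ _)) hk2
      have hk2' : 2 ≤ k := le_trans (le_trans (le_max_right K 2) (Nat.le_add_right _ _)) hk2
      have hkpos : (0:ℝ) < k := by
        have : (2:ℝ) ≤ (k:ℝ) := by exact_mod_cast hk2'
        linarith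
      have hexp : Real.exp (max (2 * Real.log A) 1) ≤ (k:ℝ) := by
        calc Real.exp (max (2 * Real.log A) 1)
            ≤ (⌈Real.exp (max (2 * Real.log A) 1)⌉₊ : ℝ) := Nat.le_ceil _
          _ ≤ (K₂ : ℝ) := by exact_mod_cast Nat.le_add_left _ _
          _ ≤ (k:ℝ) := by exact_mod_cast hk2
      have hlogk : max (2 * Real.log A) 1 ≤ Real.log k := by
        calc max (2 * Real.log A) 1 = Real.log (Real.exp (max (2 * Real.log A) 1)) :=
              (Real.log_exp _).symm
          _ ≤ Real.log k := Real.log_le_log (Real.exp_pos _) hexp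
      have hlogk1 : 1 ≤ Real.log k := le_trans (le_max_right _ _) hlogk
      have hlogA : 2 * Real.log A ≤ Real.log k := le_trans (le_max_left _ _) hlogk
      have hlam_pos : 0 < lam k := by
        rcases lt_or_ge 0 (lam k) with h | h
        · exact h
        · exfalso
          have h0 : lam k = 0 := le_antisymm h (hnonneg k)
          have hc := hK k hkK
          rw [h0, Real.zero_rpow ha.ne'] at hc
          linarith
      have h1 : Real.log k ≤ Real.log A + a * Real.log (lam k) := by
        have hc := Real.log_le_log hkpos (hK k hkK)
        rwa [Real.log_mul hA.ne' (ne_of_gt (Real.rpow_pos_of_pos hlam_pos a)),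
          Real.log_rpow hlam_pos] at hc
      have h2 : Real.log (lam k) ≤ Real.log (2 + lam k) :=
        Real.log_le_log hlam_pos (by linarith)
      have h3 : Real.log k ≤ 2 * a * Real.log (2 + lam k) := by
        have h4 : a * Real.log (lam k) ≤ a * Real.log (2 + lam k) :=
          mul_le_mul_of_nonneg_left h2 ha.le
        nlinarith
      have hm2 : (m:ℝ) * Real.log 2 ≤ Real.log k := by
        have hc : ((2:ℕ)^m : ℝ) ≤ (k:ℝ) := by exact_mod_cast hmk
        have hc2 := Real.log_le_log (by positivity) hc
        rw [Real.log_pow] at hc2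
        push_cast at hc2
        linarith
      rcases Nat.eq_zero_or_pos m with hm0 | hmpos
      · subst hm0
        have : D * Real.log 2 ≤ D * Real.log (2 + lam k) :=
          mul_le_mul_of_nonneg_left (hL k) hD_pos.le
        push_cast
        nlinarith
      · have hm1 : (1:ℝ) ≤ (m:ℝ) := by exact_mod_cast hmpos
        have hgoal2 : ((m:ℝ)+1) * Real.log 2 ≤ (4*a + (K₂:ℝ) + 2) * Real.log (2 + lam k) := by
          nlinarith [mul_nonneg (sub_nonneg.2 hm1) hlog2.le,
            mul_nonneg (by linarith : (0:ℝ) ≤ (K₂:ℝ)+2) hLpos.le, h3, hm2]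
        rw [show D * Real.log (2 + lam k)
            = ((4*a + (K₂:ℝ) + 2) * Real.log (2 + lam k)) / Real.log 2 by
          rw [hD]; ring]
        exact (le_div_iff₀ hlog2).2 hgoal2
    · have hmK : (m:ℝ)+1 ≤ (K₂:ℝ) := by
        have h1 : m < 2^m := Nat.lt_two_pow_self
        have h2 : k < K₂ := lt_of_not_ge hk2
        have : m + 1 ≤ K₂ := by omega
        exact_mod_cast this
      have hDK : (K₂:ℝ) ≤ D * Real.log 2 := by rw [hDlog]; linarith
      have : D * Real.log 2 ≤ D * Real.log (2 + lam k) :=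
        mul_le_mul_of_nonneg_left (hL k) hD_pos.le
      linarith
  calc ((m:ℝ)+1)^2 ≤ (D * Real.log (2 + lam k))^2 :=
        pow_le_pow_left₀ (by positivity) key 2
    _ = D^2 * Real.log (2 + lam k)^2 := by ring

private lemma tsum_ofReal_le {c : ℕ → ℝ} (hc : ∀ m, 0 ≤ c m) {B : ℝ}
    (hB : ∀ M : ℕ, ∑ m ∈ Finset.range M, c m ≤ B) :
    ∑' m, ENNReal.ofReal (c m) ≤ ENNReal.ofReal B := by
  rw [ENNReal.tsum_eq_iSup_sum]
  refine iSup_le fun s => ?_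
  obtain ⟨M, hM⟩ := s.exists_nat_subset_range
  calc ∑ m ∈ s, ENNReal.ofReal (c m)
      ≤ ∑ m ∈ Finset.range M, ENNReal.ofReal (c m) :=
        Finset.sum_le_sum_of_subset hM
    _ = ENNReal.ofReal (∑ m ∈ Finset.range M, c m) :=
        (ENNReal.ofReal_sum_of_nonneg fun i _ => hc i).symm
    _ ≤ ENNReal.ofReal B := ENNReal.ofReal_le_ofReal (hB M)

private lemma ennreal_le_rpow_half {x Φ : ℝ≥0∞} (h : x^2 ≤ Φ) : x ≤ Φ ^ (1/2 : ℝ) := by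
  have h' : (x^(2:ℕ)) ^ ((1:ℝ)/2) ≤ Φ ^ ((1:ℝ)/2) := ENNReal.rpow_le_rpow h (by norm_num)
  rwa [← ENNReal.rpow_natCast x 2, ← ENNReal.rpow_mul,
    show ((2:ℕ):ℝ) * (1/2) = 1 by norm_num, ENNReal.rpow_one] at h'

private lemma ennreal_rpow_half_sq (Φ : ℝ≥0∞) : (Φ ^ (1/2:ℝ))^(2:ℕ) = Φ := by
  rw [← ENNReal.rpow_natCast (Φ ^ (1/2:ℝ)) 2, ← ENNReal.rpow_mul]
  norm_num

private lemma coeFn_finset_sum {α : Type*} [MeasurableSpace α] {μ : Measure α}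
    {E : Type*} [NormedAddCommGroup E] {p : ℝ≥0∞} {ι : Type*} (s : Finset ι)
    (F : ι → Lp E p μ) :
    (fun x => ∑ i ∈ s, (F i : α → E) x) =ᵐ[μ] ⇑(∑ i ∈ s, F i) := by
  classical
  induction s using Finset.induction_on with
  | empty =>
      simp only [Finset.sum_empty]
      exact (Lp.coeFn_zero E p μ).symm
  | @insert i s his ih =>
      rw [Finset.sum_insert his]
      filter_upwards [Lp.coeFn_add (F i) (∑ j ∈ s, F j), ih] with x hx hx2
      simp only [Finset.sum_insert his, hx, Pi.add_apply, hx2]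

private lemma lintegral_nnnorm_sq_eq {X : Type*} [MeasurableSpace X] {μ : Measure X}
    (G : Lp ℂ 2 μ) (g : X → ℂ) (hg : g =ᵐ[μ] ⇑G) :
    ∫⁻ x, ((‖g x‖₊ : ℝ≥0∞))^2 ∂μ = ENNReal.ofReal (‖G‖^2) := by
  have h1 : ∫⁻ x, ((‖g x‖₊ : ℝ≥0∞))^2 ∂μ = ∫⁻ x, ((‖(G : X → ℂ) x‖₊ : ℝ≥0∞))^2 ∂μ := by
    refine lintegral_congr_ae ?_
    filter_upwards [hg] with x hx
    rw [hx]
  have h2 : eLpNorm (⇑G) 2 μ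
      = (∫⁻ x, ((‖(G : X → ℂ) x‖₊ : ℝ≥0∞)) ^ (2:ℝ) ∂μ) ^ ((1:ℝ)/2) := by
    rw [eLpNorm_eq_lintegral_rpow_enorm_toReal (by norm_num) (by norm_num)]
    norm_num [enorm_eq_nnnorm]
  have h3 : ∫⁻ x, ((‖(G : X → ℂ) x‖₊ : ℝ≥0∞))^(2:ℕ) ∂μ = (eLpNorm (⇑G) 2 μ)^(2:ℕ) := by
    rw [h2, ← ENNReal.rpow_natCast _ 2, ← ENNReal.rpow_mul]
    norm_num
  have h4 : eLpNorm (⇑G) 2 μ = ENNReal.ofReal ‖G‖ := by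
    rw [Lp.norm_def, ENNReal.ofReal_toReal (Lp.eLpNorm_ne_top G)]
  rw [h1, h3, h4, ← ENNReal.ofReal_pow (norm_nonneg _)]

private lemma pyth {X : Type*} [MeasurableSpace X] {μ : Measure X}
    (P : ℕ → Lp ℂ 2 μ →L[ℂ] Lp ℂ 2 μ)
    (horth : ∀ j k, j ≠ k → ∀ g g' : Lp ℂ 2 μ, (inner ℂ (P j g) (P k g') : ℂ) = 0)
    (f : Lp ℂ 2 μ) (s : Finset ℕ) :
    ‖∑ k ∈ s, P k f‖^2 = ∑ k ∈ s, ‖P k f‖^2 := by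
  have hinner : (inner ℂ (∑ j ∈ s, P j f) (∑ k ∈ s, P k f) : ℂ)
      = ∑ j ∈ s, ((‖P j f‖ : ℂ))^2 := by
    rw [sum_inner]
    refine Finset.sum_congr rfl fun j hj => ?_
    rw [inner_sum, Finset.sum_eq_single_of_mem j hj]
    · exact inner_self_eq_norm_sq_to_K (𝕜 := ℂ) (P j f)
    · intro k _ hkj
      exact horth j k (fun h => hkj h.symm) f f
  have h2 : RCLike.re (inner ℂ (∑ j ∈ s, P j f) (∑ k ∈ s, P k f) : ℂ)
      = ‖∑ k ∈ s, P k f‖^2 := inner_self_eq_norm_sq _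
  rw [hinner, map_sum] at h2
  rw [← h2]
  refine Finset.sum_congr rfl fun j _ => ?_
  rw [← Complex.ofReal_pow]
  exact RCLike.ofReal_re _

private lemma block_lintegral {X : Type*} [MeasurableSpace X] {μ : Measure X}
    (P : ℕ → Lp ℂ 2 μ →L[ℂ] Lp ℂ 2 μ)
    (horth : ∀ j k, j ≠ k → ∀ g g' : Lp ℂ 2 μ, (inner ℂ (P j g) (P k g') : ℂ) = 0)
    (f : Lp ℂ 2 μ) (s : Finset ℕ) :
    ∫⁻ x, ((‖∑ k ∈ s, (P k f : X → ℂ) x‖₊ : ℝ≥0∞))^2 ∂μ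
      = ENNReal.ofReal (∑ k ∈ s, ‖P k f‖^2) := by
  rw [lintegral_nnnorm_sq_eq (∑ k ∈ s, P k f) _ (coeFn_finset_sum s _), pyth P horth f s]
private lemma Rq_aemeasurable {X : Type*} [MeasurableSpace X] {μ : Measure X}
    (P : ℕ → Lp ℂ 2 μ →L[ℂ] Lp ℂ 2 μ) (f : Lp ℂ 2 μ) (r : ℝ) (m s0 : ℕ) :
    AEMeasurable (fun x => ENNReal.ofReal
      (r * Rq (fun k => (P k f : X → ℂ) x) m s0)) μ := by
  apply AEMeasurable.ennreal_ofReal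
  apply AEMeasurable.const_mul
  unfold Rq
  refine Finset.aemeasurable_fun_sum _ fun j _ => ?_
  refine Finset.aemeasurable_fun_sum _ fun i _ => ?_
  exact ((Finset.aestronglyMeasurable_fun_sum _
    (fun k _ => Lp.aestronglyMeasurable (P k f))).norm.aemeasurable).pow_const 2

private lemma Rq_lintegral {X : Type*} [MeasurableSpace X] {μ : Measure X}
    (P : ℕ → Lp ℂ 2 μ →L[ℂ] Lp ℂ 2 μ)
    (horth : ∀ j k, j ≠ k → ∀ g g' : Lp ℂ 2 μ, (inner ℂ (P j g) (P k g') : ℂ) = 0)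
    (f : Lp ℂ 2 μ) (m s0 : ℕ) :
    ∫⁻ x, ENNReal.ofReal (Rq (fun k => (P k f : X → ℂ) x) m s0) ∂μ
      = ((m:ℝ≥0∞)+1) * ENNReal.ofReal (∑ k ∈ Finset.Ico s0 (s0 + 2^m), ‖P k f‖^2) := by
  have hpt : ∀ x, ENNReal.ofReal (Rq (fun k => (P k f : X → ℂ) x) m s0)
      = ∑ j ∈ Finset.range (m+1), ∑ i ∈ Finset.range (2^(m-j)),
          ((‖∑ k ∈ Finset.Ico (s0 + i*2^j) (s0 + i*2^j + 2^j), (P k f : X → ℂ) x‖₊ : ℝ≥0∞))^2 := by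
    intro x
    unfold Rq
    rw [ENNReal.ofReal_sum_of_nonneg
      (fun _ _ => Finset.sum_nonneg fun _ _ => sq_nonneg _)]
    refine Finset.sum_congr rfl fun j _ => ?_
    rw [ENNReal.ofReal_sum_of_nonneg (fun _ _ => sq_nonneg _)]
    refine Finset.sum_congr rfl fun i _ => ?_
    rw [ENNReal.ofReal_pow (norm_nonneg _), ofReal_norm, enorm_eq_nnnorm]
  rw [lintegral_congr hpt]
  rw [lintegral_finset_sum' _ (fun j _ => Finset.aemeasurable_fun_sum _ fun i _ =>
    ((Finset.aestronglyMeasurable_fun_sum _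
      (fun k _ => Lp.aestronglyMeasurable (P k f))).nnnorm.aemeasurable.coe_nnreal_ennreal).pow_const 2)]
  have hj : ∀ j ∈ Finset.range (m+1),
      (∫⁻ x, ∑ i ∈ Finset.range (2^(m-j)),
        ((‖∑ k ∈ Finset.Ico (s0 + i*2^j) (s0 + i*2^j + 2^j), (P k f : X → ℂ) x‖₊ : ℝ≥0∞))^2 ∂μ)
      = ENNReal.ofReal (∑ k ∈ Finset.Ico s0 (s0 + 2^m), ‖P k f‖^2) := by
    intro j hj
    have hj' : j ≤ m := by simpa using Nat.lt_succ_iff.1 (Finset.mem_range.1 hj)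
    rw [lintegral_finset_sum' _ (fun i _ =>
      ((Finset.aestronglyMeasurable_fun_sum _
        (fun k _ => Lp.aestronglyMeasurable (P k f))).nnnorm.aemeasurable.coe_nnreal_ennreal).pow_const 2)]
    have h1 : ∀ i ∈ Finset.range (2^(m-j)),
        (∫⁻ x, ((‖∑ k ∈ Finset.Ico (s0 + i*2^j) (s0 + i*2^j + 2^j), (P k f : X → ℂ) x‖₊ : ℝ≥0∞))^2 ∂μ)
          = ENNReal.ofReal (∑ k ∈ Finset.Ico (s0 + i*2^j) (s0 + i*2^j + 2^j), ‖P k f‖^2) :=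
      fun i _ => block_lintegral P horth f _
    rw [Finset.sum_congr rfl h1, ← ENNReal.ofReal_sum_of_nonneg
      (fun _ _ => Finset.sum_nonneg fun _ _ => sq_nonneg _)]
    rw [sum_blocks (fun k => ‖P k f‖^2) s0 (2^j) (2^(m-j))]
    congr 2
    rw [← pow_add, Nat.sub_add_cancel hj']
  rw [Finset.sum_congr rfl hj, Finset.sum_const, Finset.card_range, nsmul_eq_mul]
  congr 1
  push_cast
  ring
/- Theorem 1.2: for a non-negative self-adjoint operator on `L²(X)` with
purely discrete spectrum, distinct eigenvalues `λ₁ < λ₂ < ⋯` satisfying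
`k ≤ A λ_k^a` for large `k`, and eigenprojections `P_k`, if
`‖log(2+L)f‖₂² = ∑ (log(2+λ_k))² ‖P_k f‖₂² < ∞` then the spherical partial
sums `S_R(L)f = ∑_{λ_k ≤ R} P_k f` converge to `f` a.e. as `R → ∞`, with
maximal inequality `‖sup_R |S_R(L)f|‖₂² ≤ C ‖log(2+L)f‖₂²`. -/
set_option maxHeartbeats 2000000 in
/-- Theorem 1.2: for a non-negative self-adjoint operator on `L²(X)` with
purely discrete spectrum, distinct eigenvalues `λ₁ < λ₂ < ⋯` satisfying
`k ≤ A λ_k^a` for large `k`, and eigenprojections `P_k`, if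
`‖log(2+L)f‖₂² = ∑ (log(2+λ_k))² ‖P_k f‖₂² < ∞` then the spherical partial
sums `S_R(L)f = ∑_{λ_k ≤ R} P_k f` converge to `f` a.e. as `R → ∞`, with
maximal inequality `‖sup_R |S_R(L)f|‖₂² ≤ C ‖log(2+L)f‖₂²`. -/
theorem ae_convergence_discrete_spectrum
    {X : Type*} [MeasurableSpace X] (μ : Measure X)
    (A a : ℝ) (hA : 0 < A) (ha : 0 < a)
    (lam : ℕ → ℝ) (hmono : StrictMono lam) (hnonneg : ∀ k, 0 ≤ lam k)
    (hcount : ∃ K : ℕ, ∀ k : ℕ, K ≤ k → (k : ℝ) ≤ A * lam k ^ a)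
    (P : ℕ → Lp ℂ 2 μ →L[ℂ] Lp ℂ 2 μ)
    (horth : ∀ j k, j ≠ k → ∀ g g' : Lp ℂ 2 μ, (inner ℂ (P j g) (P k g') : ℂ) = 0)
    (hproj : ∀ k, ∀ g : Lp ℂ 2 μ, P k (P k g) = P k g)
    (hcomplete : ∀ g : Lp ℂ 2 μ, HasSum (fun k => P k g) g)
    (f : Lp ℂ 2 μ)
    (hlog : Summable fun k : ℕ => (Real.log (2 + lam k)) ^ 2 * ‖P k f‖ ^ 2) :
    (∀ᵐ x ∂μ,
      Tendsto (fun R : ℝ => ∑' k : ℕ, if lam k ≤ R then (P k f : X → ℂ) x else 0)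
        atTop (nhds (f x))) ∧
    ∃ C : ℝ, 0 < C ∧
      ∫⁻ x, (⨆ R : ℝ, ⨆ (_ : 0 < R),
          (‖∑' k : ℕ, if lam k ≤ R then (P k f : X → ℂ) x else 0‖₊ : ℝ≥0∞)) ^ 2 ∂μ
        ≤ ENNReal.ofReal (C * ∑' k : ℕ, (Real.log (2 + lam k)) ^ 2 * ‖P k f‖ ^ 2) := by
  classical
  obtain ⟨K, hK⟩ := hcount
  obtain ⟨C₁, hC₁pos, hC₁⟩ := stepA A a hA ha lam hnonneg K hK
  have hb_nonneg : ∀ k : ℕ, (0:ℝ) ≤ ‖P k f‖^2 := fun k => sq_nonneg _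
  have hlog2 : (0:ℝ) < Real.log 2 := Real.log_pos one_lt_two
  have hw_lb : ∀ k, Real.log 2 ^ 2 ≤ Real.log (2 + lam k) ^ 2 := by
    intro k
    have h1 : Real.log 2 ≤ Real.log (2 + lam k) :=
      Real.log_le_log (by norm_num) (by linarith [hnonneg k])
    nlinarith
  have hwb_nonneg : ∀ k, 0 ≤ Real.log (2 + lam k) ^ 2 * ‖P k f‖^2 :=
    fun k => mul_nonneg (sq_nonneg _) (hb_nonneg k)
  have hb_le : ∀ k, ‖P k f‖^2
      ≤ (Real.log 2)⁻¹^2 * (Real.log (2 + lam k) ^ 2 * ‖P k f‖^2) := by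
    intro k
    have h2 : Real.log 2 ^ 2 * ‖P k f‖^2 ≤ Real.log (2 + lam k) ^ 2 * ‖P k f‖^2 :=
      mul_le_mul_of_nonneg_right (hw_lb k) (hb_nonneg k)
    calc ‖P k f‖^2 = (Real.log 2)⁻¹^2 * (Real.log 2 ^ 2 * ‖P k f‖^2) := by
          field_simp
      _ ≤ _ := mul_le_mul_of_nonneg_left h2 (by positivity)
  have hb_sum : Summable (fun k => ‖P k f‖^2) :=
    Summable.of_nonneg_of_le hb_nonneg hb_le (hlog.mul_left _)
  set W : ℝ := ∑' k : ℕ, Real.log (2 + lam k) ^ 2 * ‖P k f‖ ^ 2 with hW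
  have hW_nonneg : 0 ≤ W := tsum_nonneg hwb_nonneg
  have hPyth := pyth P horth f
  -- tail estimates
  have htail_le : ∀ n : ℕ, ‖f - ∑ k ∈ Finset.range n, P k f‖^2 ≤ ∑' j, ‖P (j+n) f‖^2 := by
    intro n
    have hb' : Summable fun j => ‖P (j+n) f‖^2 := (summable_nat_add_iff n).2 hb_sum
    have hlim : Tendsto
        (fun M => ‖(∑ k ∈ Finset.range M, P k f) - ∑ k ∈ Finset.range n, P k f‖^2)
        atTop (𝓝 (‖f - ∑ k ∈ Finset.range n, P k f‖^2)) :=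
      ((hcomplete f).tendsto_sum_nat.sub tendsto_const_nhds).norm.pow 2
    refine le_of_tendsto hlim (eventually_atTop.2 ⟨n, fun M hM => ?_⟩)
    rw [← Finset.sum_Ico_eq_sub _ hM, hPyth, Finset.sum_Ico_eq_sum_range]
    rw [Finset.sum_congr rfl (fun k _ => by rw [Nat.add_comm n k] :
      ∀ k ∈ Finset.range (M-n), ‖P (n+k) f‖^2 = ‖P (k+n) f‖^2)]
    exact Summable.sum_le_tsum _ (fun i _ => hb_nonneg _) hb'
  have htail_wb : ∀ n : ℕ,
      (∑' j, Real.log (2 + lam (j+n)) ^ 2 * ‖P (j+n) f‖^2) ≤ W := by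
    intro n
    have h5 := Summable.sum_add_tsum_nat_add
      (f := fun k => Real.log (2 + lam k) ^ 2 * ‖P k f‖ ^ 2) n hlog
    have h6 : 0 ≤ ∑ i ∈ Finset.range n, Real.log (2 + lam i) ^ 2 * ‖P i f‖^2 :=
      Finset.sum_nonneg fun i _ => hwb_nonneg i
    rw [← hW] at h5
    linarith
  have htail2 : ∀ m : ℕ, (∑' j, ‖P (j+2^m) f‖^2) ≤ (C₁ * W) * (1/(((m:ℝ)+1)^2)) := by
    intro m
    have hb' : Summable fun j => ‖P (j+2^m) f‖^2 := (summable_nat_add_iff _).2 hb_sum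
    have hwb' : Summable fun j => Real.log (2 + lam (j+2^m)) ^ 2 * ‖P (j+2^m) f‖^2 :=
      (summable_nat_add_iff _).2 hlog
    have step : ∀ j : ℕ, ‖P (j+2^m) f‖^2
        ≤ (1/(((m:ℝ)+1)^2)) * (C₁ * (Real.log (2 + lam (j+2^m)) ^ 2 * ‖P (j+2^m) f‖^2)) := by
      intro j
      have h1 := hC₁ m (j+2^m) (Nat.le_add_left _ _)
      have h2 := hb_nonneg (j+2^m)
      have h3 : ((m:ℝ)+1)^2 * ‖P (j+2^m) f‖^2
          ≤ C₁ * (Real.log (2 + lam (j+2^m)) ^ 2 * ‖P (j+2^m) f‖^2) := by nlinarith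
      have h4 : (0:ℝ) < ((m:ℝ)+1)^2 := by positivity
      rw [show (1/(((m:ℝ)+1)^2)) * (C₁ * (Real.log (2 + lam (j+2^m)) ^ 2 * ‖P (j+2^m) f‖^2))
          = (C₁ * (Real.log (2 + lam (j+2^m)) ^ 2 * ‖P (j+2^m) f‖^2))/(((m:ℝ)+1)^2) by ring]
      exact (le_div_iff₀ h4).2 (by linarith)
    calc (∑' j, ‖P (j+2^m) f‖^2)
        ≤ ∑' j, (1/(((m:ℝ)+1)^2)) * (C₁ * (Real.log (2 + lam (j+2^m)) ^ 2 * ‖P (j+2^m) f‖^2)) :=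
          Summable.tsum_le_tsum step hb' ((hwb'.mul_left C₁).mul_left _)
      _ = (1/(((m:ℝ)+1)^2)) * (C₁ * ∑' j, Real.log (2 + lam (j+2^m)) ^ 2 * ‖P (j+2^m) f‖^2) := by
          rw [tsum_mul_left, tsum_mul_left]
      _ ≤ (C₁ * W) * (1/(((m:ℝ)+1)^2)) := by
          have h7 := htail_wb (2^m)
          have h8 : (0:ℝ) ≤ 1/(((m:ℝ)+1)^2) := by positivity
          have h9 : C₁ * (∑' j, Real.log (2 + lam (j+2^m)) ^ 2 * ‖P (j+2^m) f‖^2) ≤ C₁ * W :=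
            mul_le_mul_of_nonneg_left h7 hC₁pos.le
          nlinarith
  have hT : Summable (fun m : ℕ => 1/(((m:ℝ)+1)^2)) := by
    have h0 : Summable (fun n : ℕ => 1/((n:ℝ))^2) := Real.summable_one_div_nat_pow.2 one_lt_two
    have h1 := (summable_nat_add_iff 1).2 h0
    refine h1.congr fun m => ?_
    push_cast
    ring
  set T : ℝ := ∑' m : ℕ, 1/(((m:ℝ)+1)^2) with hTdef
  have hT_nonneg : 0 ≤ T := tsum_nonneg fun m => by positivity
  have hf_sq : ‖f‖^2 ≤ (Real.log 2)⁻¹^2 * W := by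
    have h0 := htail_le 0
    simp only [Finset.range_zero, Finset.sum_empty, sub_zero, Nat.add_zero] at h0
    have h1 : (∑' k, ‖P k f‖^2)
        ≤ ∑' k, (Real.log 2)⁻¹^2 * (Real.log (2 + lam k) ^ 2 * ‖P k f‖^2) :=
      Summable.tsum_le_tsum hb_le hb_sum (hlog.mul_left _)
    rw [tsum_mul_left, ← hW] at h1
    linarith
  have hblockb : ∀ m : ℕ, (((m:ℝ)+1)^2) * (∑ k ∈ Finset.Ico (2^m) (2^m+2^m), ‖P k f‖^2)
      ≤ C₁ * ∑ k ∈ Finset.Ico (2^m) (2^m+2^m), Real.log (2 + lam k) ^ 2 * ‖P k f‖^2 := by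
    intro m
    rw [Finset.mul_sum, Finset.mul_sum]
    refine Finset.sum_le_sum fun k hk => ?_
    have hk1 : 2^m ≤ k := (Finset.mem_Ico.1 hk).1
    have h1 := hC₁ m k hk1
    have h2 := hb_nonneg k
    nlinarith
  have hIcoUnion : ∀ M : ℕ, ∑ m ∈ Finset.range M,
      (∑ k ∈ Finset.Ico (2^m) (2^m+2^m), Real.log (2 + lam k) ^ 2 * ‖P k f‖^2)
      = ∑ k ∈ Finset.Ico 1 (2^M), Real.log (2 + lam k) ^ 2 * ‖P k f‖^2 := by
    intro M
    induction M with
    | zero => simp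
    | succ M ih =>
        rw [Finset.sum_range_succ, ih, show (2:ℕ)^(M+1) = 2^M + 2^M by rw [pow_succ, Nat.mul_two]]
        exact Finset.sum_Ico_consecutive _ Nat.one_le_two_pow (Nat.le_add_right _ _)
  have hΔpartial : ∀ M : ℕ, ∑ m ∈ Finset.range M,
      (((m:ℝ)+1)^2) * (∑ k ∈ Finset.Ico (2^m) (2^m+2^m), ‖P k f‖^2) ≤ C₁ * W := by
    intro M
    calc ∑ m ∈ Finset.range M, (((m:ℝ)+1)^2) * (∑ k ∈ Finset.Ico (2^m) (2^m+2^m), ‖P k f‖^2)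
        ≤ ∑ m ∈ Finset.range M,
            C₁ * ∑ k ∈ Finset.Ico (2^m) (2^m+2^m), Real.log (2 + lam k) ^ 2 * ‖P k f‖^2 :=
          Finset.sum_le_sum fun m _ => hblockb m
      _ = C₁ * ∑ m ∈ Finset.range M,
            (∑ k ∈ Finset.Ico (2^m) (2^m+2^m), Real.log (2 + lam k) ^ 2 * ‖P k f‖^2) :=
          (Finset.mul_sum _ _ _).symm
      _ = C₁ * ∑ k ∈ Finset.Ico 1 (2^M), Real.log (2 + lam k) ^ 2 * ‖P k f‖^2 := by
          rw [hIcoUnion M]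
      _ ≤ C₁ * W := by
          refine mul_le_mul_of_nonneg_left ?_ hC₁pos.le
          rw [hW]
          exact Summable.sum_le_tsum _ (fun i _ => hwb_nonneg i) hlog
  have hτ_tsum_le : (∑' m : ℕ, ENNReal.ofReal (‖f - ∑ k ∈ Finset.range (2^m), P k f‖^2))
      ≤ ENNReal.ofReal ((C₁*W)*T) := by
    refine tsum_ofReal_le (fun m => sq_nonneg _) (fun M => ?_)
    calc ∑ m ∈ Finset.range M, ‖f - ∑ k ∈ Finset.range (2^m), P k f‖^2
        ≤ ∑ m ∈ Finset.range M, (C₁*W) * (1/(((m:ℝ)+1)^2)) :=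
          Finset.sum_le_sum fun m _ => le_trans (htail_le (2^m)) (htail2 m)
      _ = (C₁*W) * ∑ m ∈ Finset.range M, 1/(((m:ℝ)+1)^2) := (Finset.mul_sum _ _ _).symm
      _ ≤ (C₁*W)*T := by
          refine mul_le_mul_of_nonneg_left ?_ (by positivity)
          rw [hTdef]
          exact Summable.sum_le_tsum _ (fun i _ => by positivity) hT
  have hδ_tsum_le : (∑' m : ℕ, ENNReal.ofReal
      ((((m:ℝ)+1)^2) * ∑ k ∈ Finset.Ico (2^m) (2^m+2^m), ‖P k f‖^2))
      ≤ ENNReal.ofReal (C₁*W) :=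
    tsum_ofReal_le
      (fun m => mul_nonneg (by positivity) (Finset.sum_nonneg fun k _ => hb_nonneg k))
      hΔpartial
  -- measurability
  have hfmeas : AEMeasurable (fun x => ((‖f x‖₊ : ℝ≥0∞))^2) μ :=
    ((Lp.aestronglyMeasurable f).nnnorm.aemeasurable.coe_nnreal_ennreal).pow_const 2
  have hτmeas : ∀ m : ℕ, AEMeasurable
      (fun x => ((‖f x - ∑ k ∈ Finset.range (2^m), (P k f : X → ℂ) x‖₊ : ℝ≥0∞))^2) μ :=
    fun m => (((Lp.aestronglyMeasurable f).sub
      (Finset.aestronglyMeasurable_fun_sum _ fun k _ => Lp.aestronglyMeasurable (P k f))).nnnorm.aemeasurable.coe_nnreal_ennreal).pow_const 2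
  have hδmeas : ∀ m : ℕ, AEMeasurable (fun x => ENNReal.ofReal
      (((m:ℝ)+1) * Rq (fun k => (P k f : X → ℂ) x) m (2^m))) μ :=
    fun m => Rq_aemeasurable P f _ m (2^m)
  -- integrals
  have hfint : ∫⁻ x, ((‖f x‖₊ : ℝ≥0∞))^2 ∂μ = ENNReal.ofReal (‖f‖^2) :=
    lintegral_nnnorm_sq_eq f _ EventuallyEq.rfl
  have hτint : ∀ m : ℕ,
      ∫⁻ x, ((‖f x - ∑ k ∈ Finset.range (2^m), (P k f : X → ℂ) x‖₊ : ℝ≥0∞))^2 ∂μ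
        = ENNReal.ofReal (‖f - ∑ k ∈ Finset.range (2^m), P k f‖^2) := by
    intro m
    refine lintegral_nnnorm_sq_eq _ _ ?_
    have h1 := coeFn_finset_sum (Finset.range (2^m)) (fun k => P k f)
    have h2 := Lp.coeFn_sub f (∑ k ∈ Finset.range (2^m), P k f)
    filter_upwards [h1, h2] with x hx1 hx2
    rw [hx2, Pi.sub_apply, ← hx1]
  have hδint : ∀ m : ℕ,
      ∫⁻ x, ENNReal.ofReal (((m:ℝ)+1) * Rq (fun k => (P k f : X → ℂ) x) m (2^m)) ∂μ
        = ENNReal.ofReal ((((m:ℝ)+1)^2) * ∑ k ∈ Finset.Ico (2^m) (2^m+2^m), ‖P k f‖^2) := by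
    intro m
    have h1 : ∀ x : X, ENNReal.ofReal (((m:ℝ)+1) * Rq (fun k => (P k f : X → ℂ) x) m (2^m))
        = ENNReal.ofReal ((m:ℝ)+1) * ENNReal.ofReal (Rq (fun k => (P k f : X → ℂ) x) m (2^m)) :=
      fun x => ENNReal.ofReal_mul (by positivity)
    rw [lintegral_congr h1, lintegral_const_mul' _ _ ENNReal.ofReal_ne_top,
      Rq_lintegral P horth f m (2^m)]
    have h2 : ENNReal.ofReal ((m:ℝ)+1) = ((m:ℕ):ℝ≥0∞) + 1 := by
      rw [show ((m:ℝ)+1) = (((m+1:ℕ)):ℝ) by push_cast; ring, ENNReal.ofReal_natCast]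
      push_cast
      ring
    conv_rhs => rw [show (((m:ℝ)+1)^2) * (∑ k ∈ Finset.Ico (2^m) (2^m+2^m), ‖P k f‖^2)
        = ((m:ℝ)+1) * (((m:ℝ)+1) * ∑ k ∈ Finset.Ico (2^m) (2^m+2^m), ‖P k f‖^2) from by ring]
    rw [ENNReal.ofReal_mul (by positivity : (0:ℝ) ≤ (m:ℝ)+1),
      ENNReal.ofReal_mul (by positivity : (0:ℝ) ≤ (m:ℝ)+1), h2]
  -- counting function
  have hlam_unbdd : ∀ R : ℝ, ∃ k, R < lam k := by
    intro R
    by_contra hcon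
    push_neg at hcon
    have hR0 : 0 ≤ R := le_trans (hnonneg 0) (hcon 0)
    set M : ℕ := K + ⌈A * R^a⌉₊ + 1 with hM
    have h1 := hK M (by omega)
    have h2 : lam M ^ a ≤ R ^ a := Real.rpow_le_rpow (hnonneg M) (hcon M) ha.le
    have h3 : (M:ℝ) ≤ A * R^a := le_trans h1 (mul_le_mul_of_nonneg_left h2 hA.le)
    have h4 : (⌈A * R^a⌉₊ : ℝ) < (M:ℝ) := by
      have h5 : ⌈A * R^a⌉₊ < M := by omega
      exact_mod_cast h5
    have h5 := Nat.le_ceil (A * R^a)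
    linarith
  set NN : ℝ → ℕ := fun R => Nat.find (hlam_unbdd R) with hNNdef
  have hNN_iff : ∀ (R : ℝ) (k : ℕ), lam k ≤ R ↔ k < NN R := by
    intro R k
    constructor
    · intro h
      by_contra hcon
      push_neg at hcon
      have h1 : R < lam (NN R) := by
        simp only [hNNdef]
        exact Nat.find_spec (hlam_unbdd R)
      have h2 : lam (NN R) ≤ lam k := hmono.monotone hcon
      linarith
    · intro h
      simp only [hNNdef] at h
      exact not_lt.1 (Nat.find_min (hlam_unbdd R) h)
  have htsum_eq : ∀ (x : X) (R : ℝ),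
      (∑' k : ℕ, if lam k ≤ R then (P k f : X → ℂ) x else 0)
        = ∑ k ∈ Finset.range (NN R), (P k f : X → ℂ) x := by
    intro x R
    have h0 : ∀ k ∉ Finset.range (NN R),
        (if lam k ≤ R then (P k f : X → ℂ) x else 0) = 0 := fun k hk =>
      if_neg (fun hcon => hk (Finset.mem_range.2 ((hNN_iff R k).1 hcon)))
    rw [tsum_eq_sum h0]
    exact Finset.sum_congr rfl fun k hk => if_pos ((hNN_iff R k).2 (Finset.mem_range.1 hk))
  have hNN_tendsto : Tendsto NN atTop atTop :=
    tendsto_atTop_atTop.2 fun n => ⟨lam n, fun R hR => le_of_lt ((hNN_iff R n).1 hR)⟩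
  -- the dominating function Φ
  set Φ : X → ℝ≥0∞ := fun x =>
    8*((‖f x‖₊ : ℝ≥0∞))^2
    + 8*(∑' m : ℕ, ((‖f x - ∑ k ∈ Finset.range (2^m), (P k f : X → ℂ) x‖₊ : ℝ≥0∞))^2)
    + 2*(∑' m : ℕ, ENNReal.ofReal
        (((m:ℝ)+1) * Rq (fun k => (P k f : X → ℂ) x) m (2^m))) with hΦ
  have hofNat4 : ENNReal.ofReal (4:ℝ) = (4:ℝ≥0∞) := by norm_num
  have hofNat2 : ENNReal.ofReal (2:ℝ) = (2:ℝ≥0∞) := by norm_num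
  have hkey : ∀ (x : X) (n : ℕ),
      ((‖∑ k ∈ Finset.range n, (P k f : X → ℂ) x‖₊ : ℝ≥0∞))^2 ≤ Φ x := by
    intro x n
    rcases eq_or_ne n 0 with rfl | hn
    · simp only [Finset.range_zero, Finset.sum_empty, nnnorm_zero, ENNReal.coe_zero]
      simp only [zero_pow, ne_eq, OfNat.ofNat_ne_zero, not_false_eq_true]
      exact bot_le
    · have hre := key_pointwise (fun k => (P k f : X → ℂ) x) (f x) n hn
      have hD0 : 0 ≤ ((Nat.log 2 n:ℝ)+1) * Rq (fun k => (P k f : X → ℂ) x) (Nat.log 2 n) (2^(Nat.log 2 n)) :=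
        mul_nonneg (by positivity) (Rq_nonneg _ _ _)
      calc ((‖∑ k ∈ Finset.range n, (P k f : X → ℂ) x‖₊ : ℝ≥0∞))^2
          = ENNReal.ofReal (‖∑ k ∈ Finset.range n, (P k f : X → ℂ) x‖^2) := by
            rw [ENNReal.ofReal_pow (norm_nonneg _), ofReal_norm, enorm_eq_nnnorm]
        _ ≤ ENNReal.ofReal (4*‖f x‖^2
              + 4*‖f x - ∑ k ∈ Finset.range (2^(Nat.log 2 n)), (P k f : X → ℂ) x‖^2
              + 2*(((Nat.log 2 n:ℝ)+1) * Rq (fun k => (P k f : X → ℂ) x) (Nat.log 2 n) (2^(Nat.log 2 n)))) :=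
            ENNReal.ofReal_le_ofReal hre
        _ ≤ Φ x := by
            rw [ENNReal.ofReal_add (by positivity) (by linarith),
              ENNReal.ofReal_add (by positivity) (by positivity), hΦ]
            refine add_le_add (add_le_add ?_ ?_) ?_
            · rw [ENNReal.ofReal_mul (by norm_num), ENNReal.ofReal_pow (norm_nonneg _),
                ofReal_norm, enorm_eq_nnnorm, hofNat4]
              exact mul_le_mul_left (by norm_num) _
            · rw [ENNReal.ofReal_mul (by norm_num), ENNReal.ofReal_pow (norm_nonneg _),
                ofReal_norm, enorm_eq_nnnorm, hofNat4]
              calc (4:ℝ≥0∞) * ((‖f x - ∑ k ∈ Finset.range (2^(Nat.log 2 n)), (P k f : X → ℂ) x‖₊ : ℝ≥0∞))^2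
                  ≤ 4 * ∑' m : ℕ, ((‖f x - ∑ k ∈ Finset.range (2^m), (P k f : X → ℂ) x‖₊ : ℝ≥0∞))^2 :=
                    mul_le_mul_right (ENNReal.le_tsum (Nat.log 2 n)) 4
                _ ≤ 8 * ∑' m : ℕ, ((‖f x - ∑ k ∈ Finset.range (2^m), (P k f : X → ℂ) x‖₊ : ℝ≥0∞))^2 :=
                    mul_le_mul_left (by norm_num) _
            · rw [ENNReal.ofReal_mul (by norm_num), hofNat2]
              exact mul_le_mul_right (ENNReal.le_tsum (Nat.log 2 n)) 2
  constructor
  · -- Part 1 : a.e. convergence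
    have hae1 : ∀ᵐ x ∂μ, (∑' m : ℕ,
        ((‖f x - ∑ k ∈ Finset.range (2^m), (P k f : X → ℂ) x‖₊ : ℝ≥0∞))^2) < ⊤ := by
      refine ae_lt_top' (AEMeasurable.ennreal_tsum hτmeas) ?_
      rw [lintegral_tsum hτmeas, tsum_congr (fun m => hτint m)]
      exact (lt_of_le_of_lt hτ_tsum_le ENNReal.ofReal_lt_top).ne
    have hae2 : ∀ᵐ x ∂μ, (∑' m : ℕ, ENNReal.ofReal
        (((m:ℝ)+1) * Rq (fun k => (P k f : X → ℂ) x) m (2^m))) < ⊤ := by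
      refine ae_lt_top' (AEMeasurable.ennreal_tsum hδmeas) ?_
      rw [lintegral_tsum hδmeas, tsum_congr (fun m => hδint m)]
      exact (lt_of_le_of_lt hδ_tsum_le ENNReal.ofReal_lt_top).ne
    filter_upwards [hae1, hae2] with x hx1 hx2
    have hs1 : Summable (fun m : ℕ =>
        ‖f x - ∑ k ∈ Finset.range (2^m), (P k f : X → ℂ) x‖^2) := by
      have h := ENNReal.summable_toReal hx1.ne
      refine h.congr fun m => ?_
      rw [ENNReal.toReal_pow, ENNReal.coe_toReal, coe_nnnorm]
    have hgm : Tendsto (fun m : ℕ =>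
        ‖f x - ∑ k ∈ Finset.range (2^m), (P k f : X → ℂ) x‖) atTop (𝓝 0) := by
      have h0 := hs1.tendsto_atTop_zero
      have h1 : Tendsto (fun m : ℕ => Real.sqrt
          (‖f x - ∑ k ∈ Finset.range (2^m), (P k f : X → ℂ) x‖^2)) atTop (𝓝 0) := by
        have h2 := (Real.continuous_sqrt.tendsto 0).comp h0
        simpa [Function.comp_def] using h2
      refine h1.congr fun m => Real.sqrt_sq (norm_nonneg _)
    have hΔs : Summable (fun m : ℕ =>
        ((m:ℝ)+1) * Rq (fun k => (P k f : X → ℂ) x) m (2^m)) := by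
      have h := ENNReal.summable_toReal hx2.ne
      refine h.congr fun m =>
        ENNReal.toReal_ofReal (mul_nonneg (by positivity) (Rq_nonneg _ _ _))
    have hΔ0 := hΔs.tendsto_atTop_zero
    have hlogT : Tendsto (fun n : ℕ => Nat.log 2 n) atTop atTop := by
      refine tendsto_atTop_atTop.2 fun bb => ⟨2^bb, fun n hn => ?_⟩
      calc bb = Nat.log 2 (2^bb) := (Nat.log_pow (by norm_num) bb).symm
        _ ≤ Nat.log 2 n := Nat.log_mono_right hn
    have hmain : Tendsto (fun n : ℕ => ∑ k ∈ Finset.range n, (P k f : X → ℂ) x)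
        atTop (𝓝 (f x)) := by
      rw [tendsto_iff_norm_sub_tendsto_zero]
      have hb1 : ∀ᶠ n : ℕ in atTop, ‖(∑ k ∈ Finset.range n, (P k f : X → ℂ) x) - f x‖
          ≤ Real.sqrt (((Nat.log 2 n:ℝ)+1)
              * Rq (fun k => (P k f : X → ℂ) x) (Nat.log 2 n) (2^(Nat.log 2 n)))
            + ‖f x - ∑ k ∈ Finset.range (2^(Nat.log 2 n)), (P k f : X → ℂ) x‖ := by
        filter_upwards [eventually_ne_atTop 0] with n hn
        have h1 := diff_sq_le (fun k => (P k f : X → ℂ) x) n hn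
        have h2 : ‖(∑ k ∈ Finset.range n, (P k f : X → ℂ) x)
            - ∑ k ∈ Finset.range (2^(Nat.log 2 n)), (P k f : X → ℂ) x‖
            ≤ Real.sqrt (((Nat.log 2 n:ℝ)+1)
                * Rq (fun k => (P k f : X → ℂ) x) (Nat.log 2 n) (2^(Nat.log 2 n))) := by
          have h3 := Real.sqrt_le_sqrt h1
          rwa [Real.sqrt_sq (norm_nonneg _)] at h3
        have h4 : ‖(∑ k ∈ Finset.range n, (P k f : X → ℂ) x) - f x‖
            ≤ ‖(∑ k ∈ Finset.range n, (P k f : X → ℂ) x)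
                - ∑ k ∈ Finset.range (2^(Nat.log 2 n)), (P k f : X → ℂ) x‖
              + ‖(∑ k ∈ Finset.range (2^(Nat.log 2 n)), (P k f : X → ℂ) x) - f x‖ := by
          have h5 := norm_add_le
            ((∑ k ∈ Finset.range n, (P k f : X → ℂ) x)
              - ∑ k ∈ Finset.range (2^(Nat.log 2 n)), (P k f : X → ℂ) x)
            ((∑ k ∈ Finset.range (2^(Nat.log 2 n)), (P k f : X → ℂ) x) - f x)
          rwa [sub_add_sub_cancel] at h5
        have h6 : ‖(∑ k ∈ Finset.range (2^(Nat.log 2 n)), (P k f : X → ℂ) x) - f x‖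
            = ‖f x - ∑ k ∈ Finset.range (2^(Nat.log 2 n)), (P k f : X → ℂ) x‖ :=
          norm_sub_rev _ _
        linarith
      refine squeeze_zero' (Eventually.of_forall fun n => norm_nonneg _) hb1 ?_
      have hq1 : Tendsto (fun m : ℕ => Real.sqrt
          (((m:ℝ)+1) * Rq (fun k => (P k f : X → ℂ) x) m (2^m))) atTop (𝓝 0) := by
        have h2 := (Real.continuous_sqrt.tendsto 0).comp hΔ0
        simpa [Function.comp_def] using h2
      have h7 := (hq1.comp hlogT).add (hgm.comp hlogT)
      simpa [Function.comp_def] using h7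
    have h8 := hmain.comp hNN_tendsto
    exact h8.congr fun R => (htsum_eq x R).symm
  · -- Part 2 : maximal inequality
    have hΦint : ∫⁻ x, Φ x ∂μ
        ≤ ENNReal.ofReal ((8*(Real.log 2)⁻¹^2 + 8*(C₁*T) + 2*C₁) * W) := by
      have hsplit : ∫⁻ x, Φ x ∂μ = 8 * ∫⁻ x, ((‖f x‖₊ : ℝ≥0∞))^2 ∂μ
          + 8 * ∑' m : ℕ, ∫⁻ x, ((‖f x - ∑ k ∈ Finset.range (2^m), (P k f : X → ℂ) x‖₊ : ℝ≥0∞))^2 ∂μ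
          + 2 * ∑' m : ℕ, ∫⁻ x, ENNReal.ofReal
              (((m:ℝ)+1) * Rq (fun k => (P k f : X → ℂ) x) m (2^m)) ∂μ := by
        rw [hΦ]
        beta_reduce
        rw [lintegral_add_left' ((hfmeas.const_mul 8).fun_add
          ((AEMeasurable.ennreal_tsum hτmeas).const_mul 8))]
        rw [lintegral_add_left' (hfmeas.const_mul 8)]
        rw [lintegral_const_mul' _ _ (by norm_num : (8:ℝ≥0∞) ≠ ⊤),
          lintegral_const_mul' _ _ (by norm_num : (8:ℝ≥0∞) ≠ ⊤),
          lintegral_const_mul' _ _ (by norm_num : (2:ℝ≥0∞) ≠ ⊤),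
          lintegral_tsum hτmeas, lintegral_tsum hδmeas]
      rw [hsplit, hfint, tsum_congr (fun m => hτint m), tsum_congr (fun m => hδint m)]
      have e1 : (8:ℝ≥0∞) * ENNReal.ofReal (‖f‖^2)
          ≤ 8 * ENNReal.ofReal ((Real.log 2)⁻¹^2 * W) :=
        mul_le_mul_right (ENNReal.ofReal_le_ofReal hf_sq) 8
      have e2 := mul_le_mul_right hτ_tsum_le (8:ℝ≥0∞)
      have e3 := mul_le_mul_right hδ_tsum_le (2:ℝ≥0∞)
      refine le_trans (add_le_add (add_le_add e1 e2) e3) (le_of_eq ?_)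
      rw [show (8:ℝ≥0∞) = ENNReal.ofReal (8:ℝ) by norm_num,
        show (2:ℝ≥0∞) = ENNReal.ofReal (2:ℝ) by norm_num,
        ← ENNReal.ofReal_mul (by norm_num), ← ENNReal.ofReal_mul (by norm_num),
        ← ENNReal.ofReal_mul (by norm_num),
        ← ENNReal.ofReal_add (by positivity) (by positivity),
        ← ENNReal.ofReal_add (by positivity) (by positivity)]
      congr 1
      ring
    refine ⟨8*(Real.log 2)⁻¹^2 + 8*(C₁*T) + 2*C₁, ?_, ?_⟩
    · have h1 : 0 < (Real.log 2)⁻¹ := inv_pos.2 hlog2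
      have h2 : 0 < (Real.log 2)⁻¹^2 := pow_pos h1 2
      nlinarith [hC₁pos, hT_nonneg]
    · calc ∫⁻ x, (⨆ R : ℝ, ⨆ (_ : 0 < R),
            (‖∑' k : ℕ, if lam k ≤ R then (P k f : X → ℂ) x else 0‖₊ : ℝ≥0∞)) ^ 2 ∂μ
          ≤ ∫⁻ x, Φ x ∂μ := by
            refine lintegral_mono fun x => ?_
            have hsup : (⨆ R : ℝ, ⨆ (_ : 0 < R),
                (‖∑' k : ℕ, if lam k ≤ R then (P k f : X → ℂ) x else 0‖₊ : ℝ≥0∞))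
                ≤ (Φ x)^((1:ℝ)/2) := by
              refine iSup_le fun R => iSup_le fun _ => ?_
              rw [htsum_eq x R]
              exact ennreal_le_rpow_half (hkey x (NN R))
            calc (⨆ R : ℝ, ⨆ (_ : 0 < R),
                (‖∑' k : ℕ, if lam k ≤ R then (P k f : X → ℂ) x else 0‖₊ : ℝ≥0∞)) ^ 2
                ≤ ((Φ x)^((1:ℝ)/2))^(2:ℕ) := pow_le_pow_left' hsup 2
              _ = Φ x := ennreal_rpow_half_sq _
        _ ≤ ENNReal.ofReal ((8*(Real.log 2)⁻¹^2 + 8*(C₁*T) + 2*C₁) * W) := hΦint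
end
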